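/- arXiv:1805.05700 — 2 statements merged into one kernel-verified Lean document; each statement's English description precedes it below -/
import Mathlib

section
/- (Many atypical pebbles) Let k>1 and α∈(3/4,1] be such that k^{1−α} is an integer ≥2, let Δ be a cube of side k/2 partitioned into k^{3(1−α)} pebbles (axis-aligned cubes of side k^α/2), and let P be a finite configuration of pairwise non-intersecting plates with centers in Δ. Call a pebble atypical if it does not contain the centers of two plates of P with different orientations (so it is either empty or contains only plates of a single orientation). If P contains at least two plates of different types, then the number of atypical pebbles of Δ is at least k^{2(1−α)}/2. -/
open MeasureTheory Filter

attribute [local instance] Classical.propDecidable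

noncomputable section

/-! ## Basic geometry of hard plates -/

/-- a point of `ℝ³` -/
abbrev Pt : Type := Fin 3 → ℝ

/-- an orientation: a type `i ∈ {1,2,3}` together with one of the two
assignments (`a` = `true`, `b` = `false`) of the sides `k^α` and `k`
to the two axes orthogonal to `i` -/
abbrev Orient : Type := Fin 3 × Bool

/-- a plate: a center together with an orientation -/
abbrev Plate : Type := Pt × Orient

/-- a block index in `ℤ³` -/
abbrev I3 : Type := Fin 3 → ℤ

/-- the side length, along the coordinate axis `j`, of a `1 × k^α × k` plate
with orientation `o`: side `1` along the axis `o.1`, and sides `k^α`, `k`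
along the two other axes, in one of the two possible ways according to `o.2`. -/
def sideLen (k α : ℝ) (o : Orient) (j : Fin 3) : ℝ :=
  if j = o.1 then 1
  else if j = o.1 + 1 then (if o.2 then k ^ α else k)
  else if o.2 then k else k ^ α

/-- the support `R_p` of a plate: the closed axis-aligned box centered at the
center of the plate, with side lengths `1, k^α, k` as prescribed by its orientation -/
def plSupport (k α : ℝ) (p : Plate) : Set Pt :=
  {y | ∀ j, |y j - p.1 j| ≤ sideLen k α p.2 j / 2}

/-- two plates intersect if their supports do -/
def Intersects (k α : ℝ) (p p' : Plate) : Prop :=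
  (plSupport k α p ∩ plSupport k α p').Nonempty

/-- hard-core pair interaction `φ(p,p')` -/
def phi2 (k α : ℝ) (p p' : Plate) : ℝ := if Intersects k α p p' then 0 else 1

/-- hard-core factor `φ(p_1,…,p_n) = ∏_{i<j} φ(p_i,p_j)` of a finite plate
configuration, given as a list -/
def phiL (k α : ℝ) : List Plate → ℝ
  | [] => 1
  | p :: ps => (ps.map (fun p' => phi2 k α p p')).prod * phiL k α ps

/-- hard-core interaction between two configurations -/
def crossL (k α : ℝ) (P Q : List Plate) : ℝ :=
  (P.map (fun p => (Q.map (fun p' => phi2 k α p p')).prod)).prod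

/-- the plate configuration built from centers `x` and orientations `o` -/
def mkConf {n : ℕ} (x : Fin n → Pt) (o : Fin n → Orient) : List Plate :=
  List.ofFn (fun m => (x m, o m))

/-- the Ursell function `φ^T(p_1,…,p_n)`: the sum over connected graphs on the
`n` labelled vertices (encoded by their edge sets, listed with `e.1 < e.2`) of
`∏_{{j,j'} ∈ E(g)} (φ(p_j,p_{j'}) - 1)`.  It equals `1` for `n = 1` and
vanishes for `n = 0`. -/
def ursell (k α : ℝ) {n : ℕ} (p : Fin n → Plate) : ℝ :=
  ∑ E : Finset (Fin n × Fin n),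
    if (∀ e ∈ E, e.1 < e.2) ∧ (SimpleGraph.fromRel (fun i j => (i, j) ∈ E)).Connected then
      ∏ e ∈ E, (phi2 k α (p e.1) (p e.2) - 1)
    else 0

/-- the two orientations of type `q` -/
def typeOrients (q : Fin 3) : Finset Orient := {(q, true), (q, false)}

/-! ## Partition functions of uniform systems -/

/-- grand-canonical partition function at activity `z` of plates with centers
in `S` and orientations in the finite set `O`:
`1 + ∑_{n≥1} (z^n/n!) ∫_{S^n} ∑_{orientations} φ(p_1,…,p_n)`
(the `n = 0` term of the series equals `1`). -/
def ZGen (k α z : ℝ) (S : Set Pt) (O : Finset Orient) : ℝ :=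
  ∑' n : ℕ, (z ^ n / (Nat.factorial n : ℝ)) *
    ∫ x : Fin n → Pt in Set.univ.pi (fun _ => S),
      ∑ o : Fin n → {a // a ∈ O}, phiL k α (mkConf x (fun m => (o m).1))

/-- partition function of plate configurations in `S` containing at least two
plates of different types -/
def Zge2 (k α z : ℝ) (S : Set Pt) : ℝ :=
  ∑' n : ℕ, (z ^ n / (Nat.factorial n : ℝ)) *
    ∫ x : Fin n → Pt in Set.univ.pi (fun _ => S),
      ∑ o : Fin n → Orient,
        (if ∃ i j : Fin n, (o i).1 ≠ (o j).1 then phiL k α (mkConf x o) else 0)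

/-- the closed axis-aligned cube with center `c` and side `s` -/
def cube (c : Pt) (s : ℝ) : Set Pt := {y | ∀ j, |y j - c j| ≤ s / 2}

/-- partition function of plate configurations with centers in `A ∪ B`, all
plates with center in `A` being of type `i` and all other plates of type `j` -/
def Zpair (k α z : ℝ) (i j : Fin 3) (A B : Set Pt) : ℝ :=
  ∑' n : ℕ, (z ^ n / (Nat.factorial n : ℝ)) *
    ∫ x : Fin n → Pt in Set.univ.pi (fun _ => A ∪ B),
      ∑ b : Fin n → Bool,
        phiL k α (mkConf x (fun m => ((if x m ∈ A then i else j), b m)))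

/-- `Z^{≥2}(Δ₁ ∪ Δ₂)` for a dipole: sum over pairs of distinct types -/
def Zdip (k α z : ℝ) (A B : Set Pt) : ℝ :=
  ∑ i : Fin 3, ∑ j : Fin 3, if i ≠ j then Zpair k α z i j A B else 0

/-! ## Pebbles -/

/-- the pebble with index `v` in the cube of corner `c` paved by cubes of
side `k^α/2` -/
def pebbleBox (k α : ℝ) {M : ℕ} (c : Pt) (v : Fin 3 → Fin M) : Set Pt :=
  {y | ∀ j, c j + (k ^ α / 2) * ((v j : ℕ) : ℝ) ≤ y j ∧
            y j ≤ c j + (k ^ α / 2) * (((v j : ℕ) : ℝ) + 1)}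

/-- a pebble is typical of type `i` if it contains the centers of at least two
plates of `P` of type `i` with different orientations -/
def TypicalIn (k α : ℝ) {M : ℕ} (c : Pt) (P : Finset Plate) (v : Fin 3 → Fin M)
    (i : Fin 3) : Prop :=
  ∃ p ∈ P, ∃ p' ∈ P, p.2 ≠ p'.2 ∧ p.2.1 = i ∧ p'.2.1 = i ∧
    p.1 ∈ pebbleBox k α c v ∧ p'.1 ∈ pebbleBox k α c v

/-- a pebble is atypical if it does not contain the centers of two plates of
`P` with different orientations -/
def AtypicalIn (k α : ℝ) {M : ℕ} (c : Pt) (P : Finset Plate) (v : Fin 3 → Fin M) : Prop :=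
  ¬ ∃ p ∈ P, ∃ p' ∈ P, p.2 ≠ p'.2 ∧ p.1 ∈ pebbleBox k α c v ∧ p'.1 ∈ pebbleBox k α c v

/-! ## Blocks, spins and conditioned partition functions -/

/-- the index of the (half-open) block of side `l` containing `x` -/
def blockIdx (l : ℝ) (x : Pt) : I3 := fun j => ⌊x j / l⌋

/-- the region of `ℝ³` paved by the blocks of side `ℓ = k/2` with indices in `B` -/
def regionOf (k : ℝ) (B : Finset I3) : Set Pt := {x | blockIdx (k / 2) x ∈ B}

/-- the closed region paved by the blocks with indices in `Y` -/
def regionClosed (k : ℝ) (Y : Finset I3) : Set Pt :=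
  {x | ∃ ξ ∈ Y, ∀ j, (k / 2) * (ξ j : ℝ) ≤ x j ∧ x j ≤ (k / 2) * ((ξ j : ℝ) + 1)}

/-- the block `ξ` is within rescaled `L^∞`-distance `r` of the complement of `B` -/
def nearBoundary (B : Finset I3) (r : ℤ) (ξ : I3) : Prop :=
  ∃ η : I3, η ∉ B ∧ ∀ j, |ξ j - η j| ≤ r

/-- the spin value (in `{0,1,2,3,4}`) corresponding to the plate type `i` -/
def spinOfType (i : Fin 3) : Fin 5 := ⟨i.1 + 1, by have := i.isLt; omega⟩

/-- the weight of the block `ξ` carrying the spin `s` in the presence of the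
plate configuration `P`: empty blocks get weight `1`, `-2`, `0` for
`s ∈ {1,2,3}`, `s = 0`, `s = 4` respectively, and nonempty blocks enforce the
compatibility of the plates they contain with the spin `s`. -/
def blockWeightL (l : ℝ) (P : List Plate) (ξ : I3) (s : Fin 5) : ℝ :=
  if ∀ p ∈ P, blockIdx l p.1 ≠ ξ then
    (if s = 0 then -2 else if s = 4 then 0 else 1)
  else if s = 4 then
    (if ∃ p ∈ P, ∃ p' ∈ P, blockIdx l p.1 = ξ ∧ blockIdx l p'.1 = ξ ∧ p.2.1 ≠ p'.2.1
     then 1 else 0)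
  else if ∃ i : Fin 3, s = spinOfType i ∧ ∀ p ∈ P, blockIdx l p.1 = ξ → p.2.1 = i
    then 1 else 0

/-- total compatibility weight of a plate configuration with a spin configuration -/
def confWeightL (l : ℝ) (B : Finset I3) (σ : I3 → Fin 5) (P : List Plate) : ℝ :=
  ∏ ξ ∈ B, blockWeightL l P ξ (σ ξ)

/-- extension (by `0`) of a spin configuration on `B` to all of `ℤ³` -/
def extFn (B : Finset I3) (σ : {ξ // ξ ∈ B} → Fin 5) : I3 → Fin 5 :=
  fun ξ => if h : ξ ∈ B then σ ⟨ξ, h⟩ else 0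

/-- indicator of the `q`-boundary condition: the spin equals `q` on every block
within rescaled `L^∞`-distance `8` of the complement of `B` -/
def bcWeight (B : Finset I3) (q : Fin 3) (σ : {ξ // ξ ∈ B} → Fin 5) : ℝ :=
  if ∀ ξ : {ξ // ξ ∈ B}, nearBoundary B 8 ξ.1 → σ ξ = spinOfType q then 1 else 0

/-- the partition function with `q`-boundary conditions on the union `Λ` of the
blocks indexed by `B`, with plate centers restricted to `Λ ∖ V` and with the
additional hard-core constraint that plates must not intersect the plates of
the fixed configuration `Pc`:
`Z = ∑_{σ ∈ Θ^q} ∫_{Ω_Λ(σ)} dP φ(P) z^{|P|} ∏_{p ∈ P, p' ∈ Pc} φ(p,p')`. -/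
def ZBCgen (k α z : ℝ) (B : Finset I3) (V : Set Pt) (q : Fin 3) (Pc : List Plate) : ℝ :=
  ∑ σ : {ξ // ξ ∈ B} → Fin 5,
    bcWeight B q σ *
      ∑' n : ℕ, (z ^ n / (Nat.factorial n : ℝ)) *
        ∫ x : Fin n → Pt in Set.univ.pi (fun _ => regionOf k B \ V),
          ∑ o : Fin n → Orient,
            confWeightL (k / 2) B (extFn B σ) (mkConf x o) * phiL k α (mkConf x o) *
              crossL k α (mkConf x o) Pc

/-- the `n`-point correlation function with `q`-boundary conditions,
`ρ_n^{(q,Λ)}(p_1,…,p_n) = Z(Λ|q)^{-1} ∑_{σ∈Θ^q} ∫_{Ω_Λ(σ)} dP z^{|P|+n} φ((p_1,…,p_n) ∪ P)` -/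
def corrBC (k α z : ℝ) (B : Finset I3) (V : Set Pt) (q : Fin 3) (Ps : List Plate) : ℝ :=
  (ZBCgen k α z B V q [])⁻¹ * z ^ Ps.length * phiL k α Ps * ZBCgen k α z B V q Ps

/-- an increasing sequence of cubic boxes invading `ℝ³`, each consisting of
`(8(m+1)-2)³` blocks (so that `L + 2ℓ` is divisible by `8ℓ`) -/
def boxB0 (m : ℕ) : Finset I3 :=
  Finset.Icc (fun _ => -(4 * (m : ℤ) + 3)) (fun _ => 4 * (m : ℤ) + 2)

/-- the cubic box with `(8m-2)³` blocks, aligned with the lattice of smoothing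
cubes (which exceed it by one block on each side) -/
def boxBm (m : ℕ) : Finset I3 :=
  Finset.Icc (fun _ => (-1 : ℤ)) (fun _ => 8 * (m : ℤ) - 4)

/-- `ε = max{(zk²)^{c₁}, e^{-c₂ z k^{2+α}}}` -/
def epsParam (k α z c1 c2 : ℝ) : ℝ :=
  max ((z * k ^ 2) ^ c1) (Real.exp (-(c2 * z * k ^ (2 + α))))

/-! ## Contours -/

/-- `D`-adjacency of blocks: distinct and touching on a face, an edge or a corner -/
def adjD (ξ η : I3) : Prop := ξ ≠ η ∧ ∀ j, |ξ j - η j| ≤ 1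

/-- reachability within a set of blocks through `D`-adjacency steps -/
def ReachIn (S : Finset I3) (ξ η : I3) : Prop :=
  Relation.ReflTransGen (fun a b => a ∈ S ∧ b ∈ S ∧ adjD a b) ξ η

/-- a nonempty `D`-connected set of blocks -/
def DConn (S : Finset I3) : Prop := S.Nonempty ∧ ∀ ξ ∈ S, ∀ η ∈ S, ReachIn S ξ η

/-- `Γ` is a `D`-connected component of `S` -/
def IsDComponent (S Γ : Finset I3) : Prop :=
  Γ ⊆ S ∧ DConn Γ ∧ ∀ ξ ∈ Γ, ∀ η ∈ S, adjD ξ η → η ∈ Γ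

/-- two sets of blocks are `D`-disconnected -/
def DDisj (A B : Finset I3) : Prop := ∀ ξ ∈ A, ∀ η ∈ B, ξ ≠ η ∧ ¬ adjD ξ η

/-- the combinatorial datum of a contour: its support (a set of blocks) and its
spin configuration (normalized to `0` outside the support) -/
structure Skeleton where
  Γ : Finset I3
  σ : I3 → Fin 5

/-- the blocks of the smoothing cube (of side `8ℓ`) with index `a` -/
def smoothBlocks (a : I3) : Finset I3 :=
  Finset.Icc (fun j => 8 * a j - 2) (fun j => 8 * a j + 5)

/-- the index of the smoothing cube containing the block `η` -/
def smoothIdx (η : I3) : I3 := fun j => Int.fdiv (η j + 2) 8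

/-- the sampling cube `S_ξ` (the `8` blocks `η` with `η j - ξ j ∈ {0,1}`) is
good: all its spins are equal and lie in `{1,2,3}` -/
def sampGood (B : Finset I3) (σ : I3 → Fin 5) (ξ : I3) : Prop :=
  ∃ i : Fin 3, ∀ η ∈ B, (∀ j, η j = ξ j ∨ η j = ξ j + 1) → σ η = spinOfType i

/-- the union `B(σ)` of the bad sampling cubes -/
def badBlocks (B : Finset I3) (σ : I3 → Fin 5) : Finset I3 :=
  B.filter (fun η => ∃ ξ ∈ B, ¬ sampGood B σ ξ ∧ ∀ j, η j = ξ j ∨ η j = ξ j + 1)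

/-- the union `B_s(σ)` of the smoothing cubes intersecting `B(σ)` -/
def smoothedBad (B : Finset I3) (σ : I3 → Fin 5) : Finset I3 :=
  (badBlocks B σ).biUnion (fun η => smoothBlocks (smoothIdx η))

/-- the bad region `B̄(σ)`: `B_s(σ)` together with all blocks at rescaled
`L^∞`-distance `≤ 1` from it -/
def barB (B : Finset I3) (σ : I3 → Fin 5) : Finset I3 :=
  B.filter (fun ξ => ∃ η ∈ smoothedBad B σ, ∀ j, |ξ j - η j| ≤ 1)

/-- the exterior of `Γ` in `B`: the blocks of `B ∖ Γ` connected to the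
boundary layer of `B` -/
def extBlocks (B Γ : Finset I3) : Finset I3 :=
  (B \ Γ).filter (fun ξ => ∃ η ∈ B \ Γ, nearBoundary B 1 η ∧ ReachIn (B \ Γ) ξ η)

/-- the interiors of `Γ` in `B`: the connected components of `B ∖ Γ` not
touching the boundary of `B` -/
def interiorsSet (B Γ : Finset I3) : Set (Finset I3) :=
  {A | IsDComponent (B \ Γ) A ∧ ∀ ξ ∈ A, ¬ nearBoundary B 1 ξ}

/-- the internal magnetization of the contour `s` on the interior `A`: the
common type prescribed by the spins of `s` on the layer of `Γ` adjacent to `A` -/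
def intMag (s : Skeleton) (A : Finset I3) : Fin 3 :=
  if h : ∃ i : Fin 3, ∀ ξ ∈ s.Γ, (∃ η ∈ A, adjD ξ η) → s.σ ξ = spinOfType i
  then h.choose else 0

/-- the external magnetization of the contour `s` is `q` -/
def extMagIs (B : Finset I3) (s : Skeleton) (q : Fin 3) : Prop :=
  ∀ ξ ∈ s.Γ, (∃ η ∈ extBlocks B s.Γ, adjD ξ η) → s.σ ξ = spinOfType q

/-- the skeleton `s` is a possible contour in `Λ` (associated to the block set
`B`) with `q`-boundary conditions: it arises from a spin configuration
`τ ∈ Θ^q` admitting a compatible plate configuration, as a `D`-connected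
component of the bad region `B̄(τ)`, with matching spins. -/
def PossibleSkel (k α : ℝ) (B : Finset I3) (q : Fin 3) (s : Skeleton) : Prop :=
  (∀ ξ, ξ ∉ s.Γ → s.σ ξ = 0) ∧
  ∃ τ : I3 → Fin 5,
    (∀ ξ ∈ B, nearBoundary B 8 ξ → τ ξ = spinOfType q) ∧
    (∃ P : List Plate, (∀ p ∈ P, p.1 ∈ regionOf k B) ∧
       confWeightL (k / 2) B τ P * phiL k α P ≠ 0) ∧
    IsDComponent (barB B τ) s.Γ ∧ (∀ ξ ∈ s.Γ, s.σ ξ = τ ξ)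

/-- the sub-configuration of the plates of `P` belonging to `Γ` -/
def restrictConf (l : ℝ) (Γ : Finset I3) (P : List Plate) : List Plate :=
  P.filter (fun p => decide (blockIdx l p.1 ∈ Γ))

/-- the function `F_γ(P)` for the contour with support `Γ` and plate
configuration `Pγ`: equal to `1` if `P` contains a plate belonging to `Λ ∖ Γ`
and a plate belonging to `Γ`, or a plate belonging to `Ext Γ` intersecting a
plate of `Pγ`; `0` otherwise. -/
def FgamL (k α : ℝ) (B Γ : Finset I3) (Pγ PQ : List Plate) : ℝ :=
  if (∃ p1 ∈ PQ, ∃ p2 ∈ PQ, blockIdx (k / 2) p1.1 ∉ Γ ∧ blockIdx (k / 2) p2.1 ∈ Γ) ∨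
     (∃ p1 ∈ PQ, blockIdx (k / 2) p1.1 ∈ extBlocks B Γ ∧ ∃ p2 ∈ Pγ, Intersects k α p1 p2)
  then 1 else 0

/-- `∫_{Ω^q_Λ} dP φ^T(P) z^{|P|} F_γ(P)`, the exponent of the dressing factor
of the contour activity -/
def dressInt (k α z : ℝ) (B : Finset I3) (q : Fin 3) (Γ : Finset I3) (Pγ : List Plate) : ℝ :=
  ∑' n : ℕ, (z ^ (n + 1) / (Nat.factorial (n + 1) : ℝ)) *
    ∫ x : Fin (n + 1) → Pt in Set.univ.pi (fun _ => regionOf k B),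
      ∑ b : Fin (n + 1) → Bool,
        ursell k α (fun m => (x m, (q, b m))) *
          FgamL k α B Γ Pγ (mkConf x (fun m => (q, b m)))

/-- the activity `ζ_q^{(Λ)}(γ)` of the contour `γ = (Γ, σ_γ, Pγ)`:
`(z^{|Pγ|} φ(Pγ)/Z^q(Γ)) ∏_j (Z^{(γ)}(Int_j Γ|m^j)/Z(Int_j Γ|q)) e^{-∫ φ^T z^{|P|} F_γ}` -/
def zetaL (k α z : ℝ) (B : Finset I3) (q : Fin 3) (s : Skeleton) (Pγ : List Plate) : ℝ :=
  (z ^ Pγ.length * phiL k α Pγ / ZGen k α z (regionOf k s.Γ) (typeOrients q)) *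
  (∏ᶠ A ∈ interiorsSet B s.Γ,
     ZBCgen k α z A ∅ (intMag s A) Pγ / ZBCgen k α z A ∅ q []) *
  Real.exp (-(dressInt k α z B q s.Γ Pγ))

/-- `∑_{n≥2} ((-1)^n/n!) ∑*_{γ_1,…,γ_n ∈ ∂ distinct} F_{γ_1}(P) ⋯ F_{γ_n}(P)`,
where the plate configuration of each contour is the restriction of `Pfull` to
its support -/
def multiF (k α : ℝ) (B : Finset I3) (D : Finset Skeleton) (Pfull Pq : List Plate) : ℝ :=
  ∑ r ∈ Finset.range (D.card + 1),
    if 2 ≤ r then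
      ((-1 : ℝ) ^ r / (Nat.factorial r : ℝ)) *
        ∑ g : Fin r → {s // s ∈ D},
          (if Function.Injective g then
            ∏ i : Fin r,
              FgamL k α B (g i).1.Γ (restrictConf (k / 2) (g i).1.Γ Pfull) Pq
          else 0)
    else 0

/-- the multi-contour interaction `W^{(Λ)}(∂)` -/
def Wfun (k α z : ℝ) (B : Finset I3) (q : Fin 3) (D : Finset Skeleton)
    (Pfull : List Plate) : ℝ :=
  ∑' n : ℕ, (z ^ (n + 1) / (Nat.factorial (n + 1) : ℝ)) *
    ∫ x : Fin (n + 1) → Pt in Set.univ.pi (fun _ => regionOf k B),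
      ∑ b : Fin (n + 1) → Bool,
        ursell k α (fun m => (x m, (q, b m))) *
          multiF k α B D Pfull (mkConf x (fun m => (q, b m)))

/-- a collection of possible contours, with pairwise `D`-disconnected supports,
all of whose external magnetizations equal `q` -/
def GoodContourConfig (k α : ℝ) (B : Finset I3) (q : Fin 3) (D : Finset Skeleton) : Prop :=
  (∀ s ∈ D, PossibleSkel k α B q s ∧ extMagIs B s q) ∧
  (∀ s ∈ D, ∀ t ∈ D, s ≠ t → DDisj s.Γ t.Γ)

/-- the sum `∑_{∂ ∈ C(Λ,q)} (∏_{γ∈∂} ζ_q^{(Λ)}(γ)) e^{W^{(Λ)}(∂)}` over contour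
configurations, the sum including the integration over the plate
configurations inside the contour supports -/
def contourSum (k α z : ℝ) (B : Finset I3) (q : Fin 3) : ℝ :=
  ∑ᶠ D ∈ {D : Finset Skeleton | D.Nonempty ∧ GoodContourConfig k α B q D},
    ∑' n : ℕ, (1 / (Nat.factorial n : ℝ)) *
      ∫ x : Fin n → Pt in Set.univ.pi (fun _ => regionOf k (D.biUnion Skeleton.Γ)),
        ∑ o : Fin n → Orient,
          (∏ s ∈ D,
            confWeightL (k / 2) s.Γ s.σ (restrictConf (k / 2) s.Γ (mkConf x o)) *
              zetaL k α z B q s (restrictConf (k / 2) s.Γ (mkConf x o))) *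
            Real.exp (Wfun k α z B q D (mkConf x o))

/-! ## Polymers -/

/-- the single-contour part `K_{q,1}^{(Λ)}(X)` of the polymer activity -/
def K1 (k α z : ℝ) (B : Finset I3) (q : Fin 3) (X : Finset I3) : ℝ :=
  ∑ᶠ s ∈ {s : Skeleton | PossibleSkel k α B q s ∧ extMagIs B s q ∧ s.Γ = X},
    ∑' n : ℕ, (1 / (Nat.factorial n : ℝ)) *
      ∫ x : Fin n → Pt in Set.univ.pi (fun _ => regionOf k X),
        ∑ o : Fin n → Orient,
          confWeightL (k / 2) X s.σ (mkConf x o) * zetaL k α z B q s (mkConf x o)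

/-- `𝕀_Y(P)`: `Y` is the smallest `D`-connected union of blocks containing the
supports of all plates of `P` -/
def IndY (k α : ℝ) (Y : Finset I3) (P : List Plate) : ℝ :=
  if DConn Y ∧ (∀ p ∈ P, plSupport k α p ⊆ regionClosed k Y) ∧
      (∀ Y' : Finset I3, Y' ⊆ Y → DConn Y' →
        (∀ p ∈ P, plSupport k α p ⊆ regionClosed k Y') → Y' = Y)
  then 1 else 0

/-- the localized multi-contour interaction `F_∂(Y)` -/
def Fcal (k α z : ℝ) (B : Finset I3) (q : Fin 3) (D : Finset Skeleton)
    (Pfull : List Plate) (Y : Finset I3) : ℝ :=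
  ∑' n : ℕ, (z ^ (n + 1) / (Nat.factorial (n + 1) : ℝ)) *
    ∫ x : Fin (n + 1) → Pt in Set.univ.pi (fun _ => regionOf k B),
      ∑ b : Fin (n + 1) → Bool,
        ursell k α (fun m => (x m, (q, b m))) *
          multiF k α B D Pfull (mkConf x (fun m => (q, b m))) *
          IndY k α Y (mkConf x (fun m => (q, b m)))

/-- `∑_{p≥1} (1/p!) ∑*_{Y_1,…,Y_p ∈ 𝔅^T(X) distinct, ∪Y_j = X₁} ∏_j (e^{F_∂(Y_j)} - 1)` -/
def Ysum (k α z : ℝ) (B : Finset I3) (q : Fin 3) (D : Finset Skeleton)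
    (X X1 : Finset I3) (Pfull : List Plate) : ℝ :=
  ∑' p : ℕ, (1 / (Nat.factorial (p + 1) : ℝ)) *
    ∑ Ys : Fin (p + 1) → {A // A ∈ X.powerset},
      (if Function.Injective Ys ∧ (∀ i, DConn (Ys i).1) ∧
          Finset.univ.sup (fun i => (Ys i).1) = X1
       then ∏ i, (Real.exp (Fcal k α z B q D Pfull (Ys i).1) - 1)
       else 0)

/-- the multi-contour part `K_{q,≥2}^{(Λ)}(X)` of the polymer activity -/
def Kge2 (k α z : ℝ) (B : Finset I3) (q : Fin 3) (X : Finset I3) : ℝ :=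
  ∑ X0 ∈ X.powerset, ∑ X1 ∈ X.powerset,
    (if X0 ∪ X1 = X then (1 : ℝ) else 0) *
      ∑ᶠ D ∈ {D : Finset Skeleton | 2 ≤ D.card ∧ GoodContourConfig k α B q D ∧
                D.biUnion Skeleton.Γ = X0},
        ∑' n : ℕ, (1 / (Nat.factorial n : ℝ)) *
          ∫ x : Fin n → Pt in Set.univ.pi (fun _ => regionOf k X0),
            ∑ o : Fin n → Orient,
              (∏ s ∈ D,
                confWeightL (k / 2) s.Γ s.σ (restrictConf (k / 2) s.Γ (mkConf x o)) *
                  zetaL k α z B q s (restrictConf (k / 2) s.Γ (mkConf x o))) *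
                Ysum k α z B q D X X1 (mkConf x o)

/-- the polymer activity `K_q^{(Λ)}(X) = K_{q,1}^{(Λ)}(X) + K_{q,≥2}^{(Λ)}(X)` -/
def Kpoly (k α z : ℝ) (B : Finset I3) (q : Fin 3) (X : Finset I3) : ℝ :=
  K1 k α z B q X + Kge2 k α z B q X

/-- the polymers of `Λ`: the nonempty `D`-connected unions of blocks of `B` -/
def polymers (B : Finset I3) : Finset (Finset I3) :=
  B.powerset.filter (fun A => DConn A)

/-- hard-core polymer interaction: `1` if `D`-disconnected, `0` otherwise -/
def polyPhi2 (A B : Finset I3) : ℝ := if DDisj A B then 1 else 0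

/-- the polymer Ursell function `φ^T(X_1,…,X_r)` -/
def polyUrsell {r : ℕ} (Xs : Fin r → Finset I3) : ℝ :=
  ∑ E : Finset (Fin r × Fin r),
    if (∀ e ∈ E, e.1 < e.2) ∧ (SimpleGraph.fromRel (fun i j => (i, j) ∈ E)).Connected then
      ∏ e ∈ E, (polyPhi2 (Xs e.1) (Xs e.2) - 1)
    else 0

/-- `∫_{Ω_Γ(σ_γ)} dP_γ |ζ_q^{(Λ)}(γ)|` -/
def contourAbsInt (k α z : ℝ) (B : Finset I3) (q : Fin 3) (s : Skeleton) : ℝ :=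
  ∑' n : ℕ, (1 / (Nat.factorial n : ℝ)) *
    ∫ x : Fin n → Pt in Set.univ.pi (fun _ => regionOf k s.Γ),
      ∑ o : Fin n → Orient,
        |confWeightL (k / 2) s.Γ s.σ (mkConf x o) * zetaL k α z B q s (mkConf x o)|

/-- `∫_{Ω_Γ(σ_γ)} dP_γ z^{|P_γ|} φ(P_γ) / Z^q(Γ)` -/
def contourPlateWeight (k α z : ℝ) (q : Fin 3) (s : Skeleton) : ℝ :=
  (∑' n : ℕ, (z ^ n / (Nat.factorial n : ℝ)) *
    ∫ x : Fin n → Pt in Set.univ.pi (fun _ => regionOf k s.Γ),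
      ∑ o : Fin n → Orient,
        confWeightL (k / 2) s.Γ s.σ (mkConf x o) * phiL k α (mkConf x o)) /
  ZGen k α z (regionOf k s.Γ) (typeOrients q)

/-- the admissible regions `𝔉nt`: connected regions obtained from a union of
smoothing cubes by removing all blocks at rescaled `L^∞`-distance `1` from the
complement -/
def Fnt : Set (Finset I3) :=
  {B | ∃ A : Finset I3, A.Nonempty ∧
        B = (A.biUnion smoothBlocks).filter
              (fun ξ => ¬ nearBoundary (A.biUnion smoothBlocks) 1 ξ) ∧
        DConn B}

/-- the one-point function of the pure type-`q` plate gas in `S`: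
`Z^q(S)^{-1} ∫_{Ω^q_S} dP z^{|P|+1} φ({p₀} ∪ P)` -/
def corrPure (k α z : ℝ) (S : Set Pt) (q : Fin 3) (p₀ : Plate) : ℝ :=
  (ZGen k α z S (typeOrients q))⁻¹ *
    ∑' n : ℕ, (z ^ (n + 1) / (Nat.factorial n : ℝ)) *
      ∫ x : Fin n → Pt in Set.univ.pi (fun _ => S),
        ∑ b : Fin n → Bool, phiL k α (p₀ :: mkConf x (fun m => (q, b m)))

end

namespace MAP

def sax (i : Fin 3) (b : Bool) : Fin 3 := if b then i + 1 else i + 2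

lemma sax_ne (i : Fin 3) (b : Bool) : sax i b ≠ i := by revert i b; decide

lemma sax_spec : ∀ (i a : Fin 3), a ≠ i → ∃ b : Bool, sax i b = a := by decide

lemma third_ne : ∀ i j : Fin 3, i ≠ j → (-i - j ≠ i ∧ -i - j ≠ j) := by decide

lemma eq_third : ∀ i j a : Fin 3, a ≠ i → a ≠ j → i ≠ j → a = -i - j := by decide

lemma cover3 : ∀ (a t : Fin 3), t = a ∨ t = a + 1 ∨ t = a + 2 := by decide

lemma sideLen_eq (k α : ℝ) (i : Fin 3) (b : Bool) (a : Fin 3) :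
    sideLen k α (i, b) a = if a = i then 1 else if a = sax i b then k ^ α else k := by
  rcases b with _ | _ <;> fin_cases i <;> fin_cases a <;> simp [sideLen, sax] <;> rfl

section
variable {k α : ℝ} (hk : 1 < k) (h1 : 1 ≤ k ^ α) (h2 : k ^ α ≤ k)

include hk h1 h2 in
lemma one_le_sideLen (o : Orient) (a : Fin 3) : 1 ≤ sideLen k α o a := by
  obtain ⟨i, b⟩ := o
  rw [sideLen_eq]
  split_ifs <;> linarith

include hk h1 h2 in
lemma ka_le_sideLen {i : Fin 3} {b : Bool} {a : Fin 3} (h : a ≠ i) :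
    k ^ α ≤ sideLen k α (i, b) a := by
  rw [sideLen_eq]
  split_ifs <;> first | exact absurd ‹_› h | linarith

include hk h1 h2 in
lemma intersects_of_small (p p' : Plate)
    (h : ∀ j, |p.1 j - p'.1 j| ≤ (sideLen k α p.2 j + sideLen k α p'.2 j) / 2) :
    Intersects k α p p' := by
  refine ⟨fun j => max (p.1 j - sideLen k α p.2 j / 2) (p'.1 j - sideLen k α p'.2 j / 2),
    fun j => ?_, fun j => ?_⟩ <;>
  · show |max (p.1 j - sideLen k α p.2 j / 2) (p'.1 j - sideLen k α p'.2 j / 2) - _| ≤ _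
    have hj := h j
    have hs1 := one_le_sideLen hk h1 h2 p.2 j
    have hs2 := one_le_sideLen hk h1 h2 p'.2 j
    rw [abs_le] at hj ⊢
    rcases max_cases (p.1 j - sideLen k α p.2 j / 2) (p'.1 j - sideLen k α p'.2 j / 2) with
      ⟨hq, hq'⟩ | ⟨hq, hq'⟩ <;> rw [hq] <;> constructor <;> linarith

end

lemma pebble_dist {k α : ℝ} {M : ℕ} {c : Pt} {v w : Fin 3 → Fin M} {x y : Pt}
    (hka : 0 ≤ k ^ α)
    (hx : x ∈ pebbleBox k α c v) (hy : y ∈ pebbleBox k α c w) (a : Fin 3) :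
    |x a - y a| ≤ (|((v a : ℕ) : ℝ) - ((w a : ℕ) : ℝ)| + 1) * (k ^ α / 2) := by
  obtain ⟨h1, h2⟩ := hx a
  obtain ⟨h3, h4⟩ := hy a
  have hA : ((v a : ℕ) : ℝ) - ((w a : ℕ) : ℝ) ≤ |((v a : ℕ) : ℝ) - ((w a : ℕ) : ℝ)| :=
    le_abs_self _
  have hB : -|((v a : ℕ) : ℝ) - ((w a : ℕ) : ℝ)| ≤ ((v a : ℕ) : ℝ) - ((w a : ℕ) : ℝ) :=
    neg_abs_le _
  rw [abs_le]
  constructor <;> nlinarith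

lemma pebble_dist_lt_M {M : ℕ} (hM : 0 < M) (v w : Fin M) :
    |((v : ℕ) : ℝ) - ((w : ℕ) : ℝ)| + 1 ≤ (M : ℝ) := by
  have hv : ((v : ℕ) : ℝ) ≤ (M : ℝ) - 1 := by
    have h := Nat.cast_le (α := ℝ).mpr (Nat.le_pred_of_lt v.isLt)
    rw [Nat.pred_eq_sub_one, Nat.cast_sub hM] at h; simpa using h
  have hw : ((w : ℕ) : ℝ) ≤ (M : ℝ) - 1 := by
    have h := Nat.cast_le (α := ℝ).mpr (Nat.le_pred_of_lt w.isLt)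
    rw [Nat.pred_eq_sub_one, Nat.cast_sub hM] at h; simpa using h
  have hv0 : (0:ℝ) ≤ ((v : ℕ) : ℝ) := Nat.cast_nonneg _
  have hw0 : (0:ℝ) ≤ ((w : ℕ) : ℝ) := Nat.cast_nonneg _
  rcases abs_cases (((v : ℕ) : ℝ) - ((w : ℕ) : ℝ)) with ⟨hq, _⟩ | ⟨hq, _⟩ <;> rw [hq] <;> linarith


lemma keyG {k α : ℝ} {M : ℕ} (hk : 1 < k) (h1 : 1 ≤ k ^ α) (h2 : k ^ α ≤ k)
    (hMk : (M : ℝ) * k ^ α ≤ k) (hM : 0 < M) {c : Pt}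
    {x y : Pt} {i j : Fin 3} {b b' : Bool} (hij : i ≠ j)
    (hni : ¬ Intersects k α (x, (i, b)) (y, (j, b')))
    {v w : Fin 3 → Fin M} (hx : x ∈ pebbleBox k α c v) (hy : y ∈ pebbleBox k α c w) :
    ∃ a : Fin 3, (a = i ∨ a = sax i b) ∧ (a = j ∨ a = sax j b') ∧ v a ≠ w a ∧
      (a = sax i b → a = sax j b' → 1 < |((v a : ℕ) : ℝ) - ((w a : ℕ) : ℝ)|) := by
  have hka0 : (0:ℝ) < k ^ α := lt_of_lt_of_le one_pos h1
  have hcrit := mt (intersects_of_small hk h1 h2 (x, (i, b)) (y, (j, b'))) hni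
  push_neg at hcrit
  obtain ⟨a, ha⟩ := hcrit
  simp only at ha
  set D : ℝ := |((v a : ℕ) : ℝ) - ((w a : ℕ) : ℝ)| with hD
  have hD0 : 0 ≤ D := abs_nonneg _
  have hdist : |x a - y a| ≤ (D + 1) * (k ^ α / 2) := pebble_dist hka0.le hx hy a
  have hDM : D + 1 ≤ (M : ℝ) := pebble_dist_lt_M hM (v a) (w a)
  have hlt : sideLen k α (i, b) a + sideLen k α (j, b') a < (D + 1) * k ^ α := by
    nlinarith
  have hltk : sideLen k α (i, b) a + sideLen k α (j, b') a < k := by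
    have : (D + 1) * k ^ α ≤ (M : ℝ) * k ^ α := by nlinarith
    linarith
  have hs1 := one_le_sideLen hk h1 h2 (i, b) a
  have hs2 := one_le_sideLen hk h1 h2 (j, b') a
  have hA : a = i ∨ a = sax i b := by
    by_contra hcon
    push_neg at hcon
    rw [sideLen_eq, if_neg hcon.1, if_neg hcon.2] at hlt hltk hs1
    linarith
  have hB : a = j ∨ a = sax j b' := by
    by_contra hcon
    push_neg at hcon
    rw [sideLen_eq (i := j), if_neg hcon.1, if_neg hcon.2] at hlt hltk hs2
    linarith
  have hC : v a ≠ w a := by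
    intro hvw
    have hDz : D = 0 := by rw [hD, hvw, sub_self, abs_zero]
    rw [hDz] at hlt
    have hone : k ^ α ≤ sideLen k α (i, b) a ∨ k ^ α ≤ sideLen k α (j, b') a := by
      by_cases hai : a = i
      · exact Or.inr (ka_le_sideLen hk h1 h2 (hai ▸ hij))
      · exact Or.inl (ka_le_sideLen hk h1 h2 hai)
    rcases hone with h | h <;> linarith
  refine ⟨a, hA, hB, hC, fun hsi hsj => ?_⟩
  have hai : a ≠ i := hsi ▸ sax_ne i b
  have haj : a ≠ j := hsj ▸ sax_ne j b'
  rw [sideLen_eq, if_neg hai, if_pos hsi, sideLen_eq, if_neg haj, if_pos hsj] at hlt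
  nlinarith

lemma exists_pebble {k α : ℝ} {M : ℕ} (hM : 2 ≤ M) (hka0 : 0 < k ^ α)
    (hMk : (M : ℝ) * k ^ α = k) {c : Pt} {y : Pt}
    (hy : ∀ a, c a ≤ y a ∧ y a ≤ c a + k / 2) :
    ∃ w : Fin 3 → Fin M, y ∈ pebbleBox k α c w := by
  have hh : (0:ℝ) < k ^ α / 2 := by positivity
  refine ⟨fun a => ⟨min (M - 1) (⌊(y a - c a) / (k ^ α / 2)⌋).toNat, by omega⟩, fun a => ?_⟩
  set r : ℝ := (y a - c a) / (k ^ α / 2) with hr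
  have hr0 : 0 ≤ r := div_nonneg (by linarith [(hy a).1]) hh.le
  have hrM : r ≤ (M : ℝ) := by
    rw [hr, div_le_iff₀ hh]
    have h2 := (hy a).2
    nlinarith
  have hfl0 : 0 ≤ ⌊r⌋ := Int.floor_nonneg.mpr hr0
  set n : ℕ := min (M - 1) (⌊r⌋).toNat with hn
  have hcast : ((n : ℕ) : ℝ) ≤ r ∧ r ≤ ((n : ℕ) : ℝ) + 1 := by
    constructor
    · have : ((n : ℕ) : ℝ) ≤ ((⌊r⌋.toNat : ℕ) : ℝ) := by
        exact_mod_cast Nat.cast_le.mpr (min_le_right _ _)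
      have h3 : ((⌊r⌋.toNat : ℕ) : ℝ) = (⌊r⌋ : ℝ) := by exact_mod_cast Int.toNat_of_nonneg hfl0
      calc ((n : ℕ) : ℝ) ≤ _ := this
        _ = (⌊r⌋ : ℝ) := h3
        _ ≤ r := Int.floor_le r
    · rcases le_or_gt (⌊r⌋).toNat (M - 1) with hle | hgt
      · have hmin : n = (⌊r⌋).toNat := by rw [hn, min_eq_right hle]
        have h3 : ((⌊r⌋.toNat : ℕ) : ℝ) = (⌊r⌋ : ℝ) := by exact_mod_cast Int.toNat_of_nonneg hfl0
        rw [hmin, h3]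
        linarith [Int.lt_floor_add_one r]
      · have hmin : n = M - 1 := by rw [hn, min_eq_left hgt.le]
        have : ((n : ℕ) : ℝ) + 1 = (M : ℝ) := by
          rw [hmin, Nat.cast_sub (by omega)]; ring
        rw [this]; exact hrM
  have hy1 : y a - c a = r * (k ^ α / 2) := by rw [hr]; field_simp
  constructor
  · show c a + k ^ α / 2 * ((n : ℕ) : ℝ) ≤ y a
    have := hcast.1
    nlinarith
  · show y a ≤ c a + k ^ α / 2 * (((n : ℕ) : ℝ) + 1)
    have := hcast.2
    nlinarith

lemma gapLemma {M : ℕ} (hM : 0 < M) (C D : Finset (Fin M)) (hC : C.Nonempty) (hD : D.Nonempty)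
    (h : ∀ x ∈ C, ∀ y ∈ D, 1 < |((x : ℕ) : ℝ) - ((y : ℕ) : ℝ)|) :
    C.card + D.card + 1 ≤ M := by
  have hdisj : Disjoint C D := by
    rw [Finset.disjoint_left]
    intro x hxC hxD
    have := h x hxC x hxD
    simp only [sub_self, abs_zero] at this
    linarith
  by_cases hfull : ∀ g : Fin M, g ∈ C ∪ D
  · exfalso
    have step : ∀ n : ℕ, ∀ hn : n < M, ((⟨n, hn⟩ : Fin M) ∈ C ↔ (⟨0, hM⟩ : Fin M) ∈ C) := by
      intro n
      induction n with
      | zero => intro hn; rfl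
      | succ m ih =>
        intro hn
        have hm : m < M := by omega
        have hadj : ¬ ((⟨m, hm⟩ : Fin M) ∈ C ∧ (⟨m+1, hn⟩ : Fin M) ∈ D) ∧
            ¬ ((⟨m, hm⟩ : Fin M) ∈ D ∧ (⟨m+1, hn⟩ : Fin M) ∈ C) := by
          constructor
          · rintro ⟨hc, hd⟩
            have := h _ hc _ hd
            simp only [Fin.val_mk] at this
            push_cast at this
            rw [show ((m:ℝ) - (m+1)) = -1 by ring] at this
            simp at this
          · rintro ⟨hd, hc⟩
            have := h _ hc _ hd
            simp only [Fin.val_mk] at this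
            push_cast at this
            rw [show ((m:ℝ)+1 - m) = 1 by ring] at this
            simp at this
        have h1 := hfull ⟨m, hm⟩
        have h2 := hfull ⟨m+1, hn⟩
        rw [Finset.mem_union] at h1 h2
        constructor
        · intro hc
          rcases h1 with hmc | hmd
          · exact (ih hm).mp hmc
          · exact absurd ⟨hmd, hc⟩ hadj.2
        · intro h0
          have hmc : (⟨m, hm⟩ : Fin M) ∈ C := by
            rcases h1 with hmc | hmd
            · exact hmc
            · exact absurd hmd (by
                intro hmd'
                exact (Finset.disjoint_left.mp hdisj ((ih hm).mpr h0)) hmd')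
          rcases h2 with hc | hd
          · exact hc
          · exact absurd ⟨hmc, hd⟩ hadj.1
    obtain ⟨x0, hx0⟩ := hC
    obtain ⟨y0, hy0⟩ := hD
    have hx0' : (⟨0, hM⟩ : Fin M) ∈ C := by
      have := step x0.1 x0.isLt
      simp only [Fin.eta] at this
      exact this.mp hx0
    have hy0' : (⟨0, hM⟩ : Fin M) ∈ C → False := by
      intro h0
      have := (step y0.1 y0.isLt)
      simp only [Fin.eta] at this
      exact Finset.disjoint_left.mp hdisj (this.mpr h0) hy0
    exact hy0' hx0'
  · push_neg at hfull
    obtain ⟨g, hg⟩ := hfull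
    have hsub : C ∪ D ⊆ Finset.univ.erase g := by
      intro z hz
      exact Finset.mem_erase.mpr ⟨fun hzg => hg (hzg ▸ hz), Finset.mem_univ z⟩
    have := Finset.card_le_card hsub
    rw [Finset.card_union_of_disjoint hdisj] at this
    rw [Finset.card_erase_of_mem (Finset.mem_univ g), Finset.card_univ, Fintype.card_fin] at this
    omega

lemma card_le_prod_proj {M : ℕ} (S : Finset (Fin 3 → Fin M)) :
    S.card ≤ ∏ a : Fin 3, (S.image (fun v => v a)).card := by
  classical
  have hsub : S ⊆ Fintype.piFinset (fun a => S.image (fun v => v a)) := by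
    intro v hv
    rw [Fintype.mem_piFinset]
    exact fun a => Finset.mem_image_of_mem _ hv
  calc S.card ≤ _ := Finset.card_le_card hsub
    _ = _ := Fintype.card_piFinset _

lemma prod3_le {M : ℕ} (g : Fin 3 → ℕ) (hg : ∀ a, g a ≤ M) (m : Fin 3) :
    g 0 * g 1 * g 2 ≤ M * M * g m := by
  fin_cases m
  · calc g 0 * g 1 * g 2 ≤ g 0 * M * M := Nat.mul_le_mul (Nat.mul_le_mul_left _ (hg 1)) (hg 2)
      _ = M * M * g 0 := by ring
  · calc g 0 * g 1 * g 2 ≤ M * g 1 * M := Nat.mul_le_mul (Nat.mul_le_mul (hg 0) le_rfl) (hg 2)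
      _ = M * M * g 1 := by ring
  · exact Nat.mul_le_mul (Nat.mul_le_mul (hg 0) (hg 1)) le_rfl

end MAP

namespace MAP
lemma fin_ne1 : ∀ a : Fin 3, a ≠ a + 1 := by decide
lemma fin_ne2 : ∀ a : Fin 3, a ≠ a + 2 := by decide
lemma fin_ne12 : ∀ a : Fin 3, a + 1 ≠ a + 2 := by decide
lemma fin_third12 : ∀ a : Fin 3, -(a + 1) - (a + 2) = a := by decide
lemma fin_ne3 : ∀ a : Fin 3, -a - (a + 1) ≠ a := by decide
lemma sum3_perm (f : Fin 3 → ℕ) (i j : Fin 3) (hij : i ≠ j) :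
    f 0 + f 1 + f 2 = f i + f j + f (-i - j) := by
  fin_cases i <;> fin_cases j <;>
    simp_all [show (-1 : Fin 3) = 2 by decide, show (-2 : Fin 3) = 1 by decide,
      show (-0 : Fin 3) = 0 by decide] <;> omega
end MAP


open MAP

/-- **Many atypical pebbles.**  Let `k^{1-α} = M` be an integer `≥ 2` and let
`Δ` be the cube of corner `c` and side `k/2`, partitioned into the `M³` pebbles
of side `k^α/2`.  If a configuration `P` of pairwise non-intersecting plates
with centers in `Δ` contains at least two plates of different types, then at
least `k^{2(1-α)}/2` of the pebbles are atypical. -/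
theorem many_atypical_pebbles :
    ∀ k α : ℝ, 1 < k → α ∈ Set.Ioc (3/4 : ℝ) 1 →
    ∀ M : ℕ, 2 ≤ M → (M : ℝ) = k ^ (1 - α) →
    ∀ c : Pt, ∀ P : Finset Plate,
      (∀ p ∈ P, ∀ p' ∈ P, p ≠ p' → ¬ Intersects k α p p') →
      (∀ p ∈ P, ∀ j, c j ≤ p.1 j ∧ p.1 j ≤ c j + k / 2) →
      (∃ p ∈ P, ∃ p' ∈ P, p.2.1 ≠ p'.2.1) →
      k ^ (2 * (1 - α)) / 2 ≤
        ((Finset.univ.filter (fun v : Fin 3 → Fin M => AtypicalIn k α c P v)).card : ℝ) := by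
  intro k α hk hα M hM hMα c P hfree hin hex
  have hk0 : (0:ℝ) < k := lt_trans one_pos hk
  have h1 : (1:ℝ) ≤ k ^ α := by
    have := Real.rpow_le_rpow_of_exponent_le hk.le (le_of_lt (lt_trans (by norm_num) hα.1) : (0:ℝ) ≤ α)
    rwa [Real.rpow_zero] at this
  have h2 : k ^ α ≤ k := by
    have := Real.rpow_le_rpow_of_exponent_le hk.le hα.2
    rwa [Real.rpow_one] at this
  have hMk : (M:ℝ) * k ^ α = k := by
    rw [hMα, ← Real.rpow_add hk0]
    norm_num
  have hM0 : 0 < M := by omega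
  have hka0 : (0:ℝ) < k ^ α := lt_of_lt_of_le one_pos h1
  -- key wrapper
  have KW : ∀ (i j : Fin 3) (bi bj : Bool) (x y : Pt) (v w : Fin 3 → Fin M), i ≠ j →
      (x, (i, bi)) ∈ P → (y, (j, bj)) ∈ P → x ∈ pebbleBox k α c v → y ∈ pebbleBox k α c w →
      ∃ a : Fin 3, (a = i ∨ a = sax i bi) ∧ (a = j ∨ a = sax j bj) ∧ v a ≠ w a ∧
        (a = sax i bi → a = sax j bj → 1 < |((v a : ℕ) : ℝ) - ((w a : ℕ) : ℝ)|) := by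
    intro i j bi bj x y v w hij hxP hyP hxv hyw
    have hne : (x, (i, bi)) ≠ (y, (j, bj)) := by
      intro h
      exact hij (congrArg (fun p => p.2.1) h)
    exact keyG hk h1 h2 hMk.le hM0 hij (hfree _ hxP _ hyP hne) hxv hyw
  -- the typical pebbles of each type
  set T : Fin 3 → Finset (Fin 3 → Fin M) := fun i => Finset.univ.filter (fun v =>
    ∀ b : Bool, ∃ x : Pt, (x, (i, b)) ∈ P ∧ x ∈ pebbleBox k α c v) with hT
  have memT : ∀ (i : Fin 3) (v : Fin 3 → Fin M), v ∈ T i ↔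
      ∀ b : Bool, ∃ x : Pt, (x, (i, b)) ∈ P ∧ x ∈ pebbleBox k α c v := by
    intro i v
    simp only [hT, Finset.mem_filter, Finset.mem_univ, true_and]
  -- K1 : typical pebbles have a type
  have K1 : ∀ v : Fin 3 → Fin M, ¬ AtypicalIn k α c P v → ∃ i, v ∈ T i := by
    intro v hv
    rw [AtypicalIn, not_not] at hv
    obtain ⟨⟨x, i, bi⟩, hp, ⟨y, j, bj⟩, hq, hneq, hxv, hyv⟩ := hv
    have hij : i = j := by
      by_contra hne
      obtain ⟨a, _, _, hvw, _⟩ := KW i j bi bj x y v v hne hp hq hxv hyv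
      exact hvw rfl
    subst hij
    have hbb : bi ≠ bj := by
      intro hb
      exact hneq (by rw [hb])
    refine ⟨i, (memT i v).2 fun b => ?_⟩
    by_cases hb : b = bi
    · exact ⟨x, hb ▸ hp, hxv⟩
    · have hb' : b = bj := by cases b <;> cases bi <;> cases bj <;> first | rfl | exact absurd rfl hb | exact absurd rfl hbb | exact absurd rfl (Ne.symm hbb)
      exact ⟨y, hb' ▸ hq, hyv⟩
  -- K3 : cross constraints between typical pebbles of different types
  have K3 : ∀ i j : Fin 3, i ≠ j → ∀ v ∈ T i, ∀ w ∈ T j, ∀ a : Fin 3,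
      v a ≠ w a ∧ (a ≠ i → a ≠ j → 1 < |((v a : ℕ) : ℝ) - ((w a : ℕ) : ℝ)|) := by
    intro i j hij v hv w hw a
    rw [memT] at hv hw
    by_cases hai : a = i
    · subst hai
      obtain ⟨bi, hbi⟩ := sax_spec a (-a - j) (third_ne a j hij).1
      obtain ⟨bj, hbj⟩ := sax_spec j a hij
      obtain ⟨x, hxP, hxv⟩ := hv bi
      obtain ⟨y, hyP, hyw⟩ := hw bj
      obtain ⟨a', h1', h2', hvw, _⟩ := KW a j bi bj x y v w hij hxP hyP hxv hyw
      rw [hbi] at h1'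
      rw [hbj] at h2'
      have haa : a' = a := by
        rcases h1' with h | h
        · exact h
        · rcases h2' with h' | h'
          · exact absurd (h ▸ h' : -a - j = j) (third_ne a j hij).2
          · exact h'
      refine ⟨haa ▸ hvw, fun hcon _ => absurd rfl hcon⟩
    · by_cases haj : a = j
      · subst haj
        obtain ⟨bi, hbi⟩ := sax_spec i a hai
        obtain ⟨bj, hbj⟩ := sax_spec a (-i - a) (third_ne i a hij).2
        obtain ⟨x, hxP, hxv⟩ := hv bi
        obtain ⟨y, hyP, hyw⟩ := hw bj
        obtain ⟨a', h1', h2', hvw, _⟩ := KW i a bi bj x y v w hij hxP hyP hxv hyw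
        rw [hbi] at h1'
        rw [hbj] at h2'
        have haa : a' = a := by
          rcases h2' with h | h
          · exact h
          · rcases h1' with h' | h'
            · exact absurd (h'.symm.trans h).symm (third_ne i a hij).1
            · exact h'
        refine ⟨haa ▸ hvw, fun _ hcon => absurd rfl hcon⟩
      · have ha3 : a = -i - j := eq_third i j a hai haj hij
        obtain ⟨bi, hbi⟩ := sax_spec i a hai
        obtain ⟨bj, hbj⟩ := sax_spec j a haj
        obtain ⟨x, hxP, hxv⟩ := hv bi
        obtain ⟨y, hyP, hyw⟩ := hw bj
        obtain ⟨a', h1', h2', hvw, h4'⟩ := KW i j bi bj x y v w hij hxP hyP hxv hyw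
        rw [hbi] at h1'
        rw [hbj] at h2'
        have haa : a' = a := by
          rcases h1' with h | h
          · rcases h2' with h' | h'
            · exact absurd (h ▸ h' : i = j) hij
            · exact absurd (h ▸ h' : i = a).symm hai
          · exact h
        subst haa
        exact ⟨hvw, fun _ _ => h4' (hbi.symm ▸ rfl) (hbj.symm ▸ rfl)⟩
  -- K4 : a single plate of a different type excludes a slab
  have K4 : ∀ i : Fin 3, ∀ (y : Pt) (j : Fin 3) (bj : Bool), j ≠ i → (y, (j, bj)) ∈ P →
      ∃ (aa : Fin 3) (t : Fin M), ∀ v ∈ T i, v aa ≠ t := by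
    intro i y j bj hji hyP
    obtain ⟨w, hw⟩ := exists_pebble hM hka0 hMk (fun a => hin _ hyP a)
    have hij : i ≠ j := Ne.symm hji
    by_cases hs : sax j bj = i
    · refine ⟨i, w i, fun v hv => ?_⟩
      rw [memT] at hv
      obtain ⟨bi, hbi⟩ := sax_spec i (-i - j) (third_ne i j hij).1
      obtain ⟨x, hxP, hxv⟩ := hv bi
      obtain ⟨a', h1', h2', hvw, _⟩ := KW i j bi bj x y v w hij hxP hyP hxv hw
      rw [hbi] at h1'
      rw [hs] at h2'
      have haa : a' = i := by
        rcases h1' with h | h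
        · exact h
        · rcases h2' with h' | h'
          · exact absurd (h ▸ h' : -i - j = j) (third_ne i j hij).2
          · exact h ▸ h'
      exact haa ▸ hvw
    · have hs3 : sax j bj = -i - j := eq_third i j _ hs (sax_ne j bj) hij
      refine ⟨j, w j, fun v hv => ?_⟩
      rw [memT] at hv
      obtain ⟨bi, hbi⟩ := sax_spec i j hji
      obtain ⟨x, hxP, hxv⟩ := hv bi
      obtain ⟨a', h1', h2', hvw, _⟩ := KW i j bi bj x y v w hij hxP hyP hxv hw
      rw [hbi] at h1'
      rw [hs3] at h2'
      have haa : a' = j := by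
        rcases h2' with h | h
        · exact h
        · rcases h1' with h' | h'
          · exact absurd (h' ▸ h : i = -i - j).symm (third_ne i j hij).1
          · exact h' ▸ rfl
      exact haa ▸ hvw
  -- projections
  set Q : Fin 3 → Fin 3 → Finset (Fin M) := fun t a => (T t).image (fun v => v a) with hQ
  have prodQ : ∀ t, (T t).card ≤ (Q t 0).card * (Q t 1).card * (Q t 2).card := by
    intro t
    have h := card_le_prod_proj (T t)
    rwa [Fin.prod_univ_three] at h
  have Qle : ∀ t a, (Q t a).card ≤ M := by
    intro t a
    have := Finset.card_le_univ (Q t a)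
    simpa using this
  have Qdisj : ∀ (a t t' : Fin 3), t ≠ t' → Disjoint (Q t a) (Q t' a) := by
    intro a t t' htt
    rw [Finset.disjoint_left]
    rintro s hs hs'
    obtain ⟨v, hv, hva⟩ := Finset.mem_image.mp hs
    obtain ⟨w, hw, hwa⟩ := Finset.mem_image.mp hs'
    exact (K3 t t' htt v hv w hw a).1 (by rw [hva, hwa])
  have Qgap : ∀ i j : Fin 3, i ≠ j → (T i).Nonempty → (T j).Nonempty →
      (Q i (-i - j)).card + (Q j (-i - j)).card + 1 ≤ M := by
    intro i j hij hTi hTj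
    apply gapLemma hM0 _ _ (hTi.image _) (hTj.image _)
    rintro s hs t ht
    obtain ⟨v, hv, hva⟩ := Finset.mem_image.mp hs
    obtain ⟨w, hw, hwa⟩ := Finset.mem_image.mp ht
    rw [← hva, ← hwa]
    exact (K3 i j hij v hv w hw (-i - j)).2 (third_ne i j hij).1 (third_ne i j hij).2
  -- cover
  have hcover : (M ^ 3 : ℕ) ≤
      (Finset.univ.filter (fun v : Fin 3 → Fin M => AtypicalIn k α c P v)).card
      + ((T 0).card + (T 1).card + (T 2).card) := by
    have hsub : (Finset.univ : Finset (Fin 3 → Fin M)) ⊆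
        (Finset.univ.filter (fun v => AtypicalIn k α c P v)) ∪ ((T 0 ∪ T 1) ∪ T 2) := by
      intro v _
      by_cases hv : AtypicalIn k α c P v
      · exact Finset.mem_union_left _ (Finset.mem_filter.mpr ⟨Finset.mem_univ v, hv⟩)
      · obtain ⟨i, hi⟩ := K1 v hv
        refine Finset.mem_union_right _ ?_
        fin_cases i
        · exact Finset.mem_union_left _ (Finset.mem_union_left _ hi)
        · exact Finset.mem_union_left _ (Finset.mem_union_right _ hi)
        · exact Finset.mem_union_right _ hi
    have h3 : M ^ 3 = (Finset.univ : Finset (Fin 3 → Fin M)).card := by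
      rw [Finset.card_univ]
      simp [Fintype.card_fun]
    calc M ^ 3 = _ := h3
      _ ≤ _ := Finset.card_le_card hsub
      _ ≤ _ := Finset.card_union_le _ _
      _ ≤ _ := by
          have := Finset.card_union_le (T 0 ∪ T 1) (T 2)
          have h2' := Finset.card_union_le (T 0) (T 1)
          omega
  -- main bound on the number of typical pebbles
  have hSig : (T 0).card + (T 1).card + (T 2).card ≤ M * M * (M - 1) ∨
      (T 0).card + (T 1).card + (T 2).card ≤ M * (M - 2) * (M - 2) := by
    by_cases hall : (T 0).Nonempty ∧ (T 1).Nonempty ∧ (T 2).Nonempty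
    · right
      have hTne : ∀ t : Fin 3, (T t).Nonempty := by
        intro t
        fin_cases t
        exacts [hall.1, hall.2.1, hall.2.2]
      have hQsmall : ∀ a t : Fin 3, (Q t a).card + 2 ≤ M := by
        intro a t
        have hg := Qgap (a + 1) (a + 2) (fin_ne12 a) (hTne _) (hTne _)
        rw [fin_third12 a] at hg
        have hQ1 : 1 ≤ (Q (a + 1) a).card := Finset.card_pos.mpr ((hTne _).image _)
        have hQ2 : 1 ≤ (Q (a + 2) a).card := Finset.card_pos.mpr ((hTne _).image _)
        rcases cover3 a t with ht | ht | ht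
        · rw [ht]
          have hd1 := Qdisj a a (a + 1) (fin_ne1 a)
          have hd2 := Qdisj a a (a + 2) (fin_ne2 a)
          have hd3 := Qdisj a (a + 1) (a + 2) (fin_ne12 a)
          have hdsum : ((Q a a ∪ Q (a + 1) a) ∪ Q (a + 2) a).card ≤ M := by
            have := Finset.card_le_univ ((Q a a ∪ Q (a + 1) a) ∪ Q (a + 2) a)
            simpa using this
          rw [Finset.card_union_of_disjoint (Finset.disjoint_union_left.mpr ⟨hd2, hd3⟩),
            Finset.card_union_of_disjoint hd1] at hdsum
          omega
        · subst ht
          omega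
        · subst ht
          omega
      have key : ∀ t, (T t).card ≤ (Q t 0).card * ((M - 2) * (M - 2)) := by
        intro t
        have e1 : (Q t 1).card ≤ M - 2 := by have := hQsmall 1 t; omega
        have e2 : (Q t 2).card ≤ M - 2 := by have := hQsmall 2 t; omega
        calc (T t).card ≤ (Q t 0).card * (Q t 1).card * (Q t 2).card := prodQ t
          _ ≤ (Q t 0).card * (M - 2) * (M - 2) :=
              Nat.mul_le_mul (Nat.mul_le_mul_left _ e1) e2
          _ = (Q t 0).card * ((M - 2) * (M - 2)) := by ring
      have hsum0 : (Q 0 0).card + (Q 1 0).card + (Q 2 0).card ≤ M := by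
        have hd1 := Qdisj 0 0 1 (by decide)
        have hd2 := Qdisj 0 0 2 (by decide)
        have hd3 := Qdisj 0 1 2 (by decide)
        have hdsum : ((Q 0 0 ∪ Q 1 0) ∪ Q 2 0).card ≤ M := by
          have := Finset.card_le_univ ((Q 0 0 ∪ Q 1 0) ∪ Q 2 0)
          simpa using this
        rw [Finset.card_union_of_disjoint (Finset.disjoint_union_left.mpr ⟨hd2, hd3⟩),
          Finset.card_union_of_disjoint hd1] at hdsum
        omega
      calc (T 0).card + (T 1).card + (T 2).card
          ≤ ((Q 0 0).card + (Q 1 0).card + (Q 2 0).card) * ((M - 2) * (M - 2)) := by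
            have := key 0; have := key 1; have := key 2; nlinarith [key 0, key 1, key 2]
        _ ≤ M * ((M - 2) * (M - 2)) := Nat.mul_le_mul_right _ hsum0
        _ = M * (M - 2) * (M - 2) := by ring
    · left
      have hcase1 : ∀ i : Fin 3, (∀ t, t ≠ i → (T t).card = 0) →
          (T 0).card + (T 1).card + (T 2).card ≤ (T i).card := by
        intro i hz
        have hp := sum3_perm (fun t => (T t).card) i (i + 1) (fin_ne1 i)
        rw [hp, hz (i + 1) (Ne.symm (fin_ne1 i)), hz (-i - (i + 1)) (fin_ne3 i)]
        omega
      by_cases htwo : ∃ i j : Fin 3, i ≠ j ∧ (T i).Nonempty ∧ (T j).Nonempty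
      · obtain ⟨i, j, hij, hTi, hTj⟩ := htwo
        have hthird : (T (-i - j)).card = 0 := by
          rw [Finset.card_eq_zero, ← Finset.not_nonempty_iff_eq_empty]
          intro hne
          apply hall
          have hcov : ∀ t : Fin 3, (T t).Nonempty := by
            intro t
            by_cases h0 : t = i
            · exact h0 ▸ hTi
            · by_cases h1' : t = j
              · exact h1' ▸ hTj
              · exact (eq_third i j t h0 h1' hij) ▸ hne
          exact ⟨hcov 0, hcov 1, hcov 2⟩
        have hg := Qgap i j hij hTi hTj
        have bi' : (T i).card ≤ M * M * (Q i (-i - j)).card :=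
          le_trans (prodQ i) (prod3_le _ (fun a => Qle i a) _)
        have bj' : (T j).card ≤ M * M * (Q j (-i - j)).card :=
          le_trans (prodQ j) (prod3_le _ (fun a => Qle j a) _)
        have hsum : (T 0).card + (T 1).card + (T 2).card = (T i).card + (T j).card + (T (-i - j)).card := by
          have hp := sum3_perm (fun t => (T t).card) i j hij
          simpa using hp
        have hmul : (T i).card + (T j).card ≤
            M * M * ((Q i (-i - j)).card + (Q j (-i - j)).card) := by
          rw [Nat.mul_add]
          omega
        have hfin : (T i).card + (T j).card ≤ M * M * (M - 1) :=
          le_trans hmul (Nat.mul_le_mul_left _ (by omega))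
        omega
      · push_neg at htwo
        by_cases hone : ∃ i, (T i).Nonempty
        · obtain ⟨i, hTi⟩ := hone
          have hz : ∀ t, t ≠ i → (T t).card = 0 := by
            intro t ht
            rw [Finset.card_eq_zero, ← Finset.not_nonempty_iff_eq_empty]
            exact Finset.not_nonempty_iff_eq_empty.mpr (htwo i t (Ne.symm ht) hTi)
          obtain ⟨p₁, hp₁, p₂, hp₂, hp12⟩ := hex
          have hplate : ∃ (y : Pt) (j : Fin 3) (bj : Bool), j ≠ i ∧ (y, (j, bj)) ∈ P := by
            by_cases h : p₁.2.1 = i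
            · exact ⟨p₂.1, p₂.2.1, p₂.2.2, fun hc => hp12 (h.trans hc.symm), by
                simpa using hp₂⟩
            · exact ⟨p₁.1, p₁.2.1, p₁.2.2, h, by simpa using hp₁⟩
          obtain ⟨y, j, bj, hji, hyP⟩ := hplate
          obtain ⟨aa, tt, hslab⟩ := K4 i y j bj hji hyP
          have hQi : (Q i aa).card ≤ M - 1 := by
            have hsub : Q i aa ⊆ Finset.univ.erase tt := by
              intro s hs
              obtain ⟨v, hv, hva⟩ := Finset.mem_image.mp hs
              exact Finset.mem_erase.mpr ⟨hva ▸ hslab v hv, Finset.mem_univ _⟩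
            have := Finset.card_le_card hsub
            rw [Finset.card_erase_of_mem (Finset.mem_univ tt), Finset.card_univ,
              Fintype.card_fin] at this
            omega
          have hbi : (T i).card ≤ M * M * (M - 1) := by
            calc (T i).card ≤ M * M * (Q i aa).card :=
                le_trans (prodQ i) (prod3_le _ (fun a => Qle i a) _)
              _ ≤ M * M * (M - 1) := Nat.mul_le_mul_left _ hQi
          have := hcase1 i hz
          omega
        · push_neg at hone
          have hz : ∀ t : Fin 3, (T t).card = 0 := by
            intro t
            rw [Finset.card_eq_zero, ← Finset.not_nonempty_iff_eq_empty]
            exact Finset.not_nonempty_iff_eq_empty.mpr (hone t)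
          rw [hz 0, hz 1, hz 2]
          exact Nat.zero_le _
  -- finish
  have hgoal_eq : k ^ (2 * (1 - α)) = (M:ℝ) ^ 2 := by
    rw [mul_comm, Real.rpow_mul hk0.le, ← hMα]
    norm_num
  rw [hgoal_eq]
  have hM2R : (2:ℝ) ≤ (M:ℝ) := by exact_mod_cast hM
  have hcR : ((M:ℝ)) ^ 3 ≤
      ((Finset.univ.filter (fun v : Fin 3 → Fin M => AtypicalIn k α c P v)).card : ℝ)
      + (((T 0).card : ℝ) + ((T 1).card : ℝ) + ((T 2).card : ℝ)) := by
    exact_mod_cast hcover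
  rcases hSig with hb | hb
  · have hbR : ((T 0).card : ℝ) + ((T 1).card : ℝ) + ((T 2).card : ℝ) ≤
        (M:ℝ) * (M:ℝ) * ((M:ℝ) - 1) := by
      have h' : ((M * M * (M - 1) : ℕ) : ℝ) = (M:ℝ) * (M:ℝ) * ((M:ℝ) - 1) := by
        push_cast [Nat.cast_sub (by omega : 1 ≤ M)]
        ring
      rw [← h']
      exact_mod_cast hb
    nlinarith
  · have hbR : ((T 0).card : ℝ) + ((T 1).card : ℝ) + ((T 2).card : ℝ) ≤
        (M:ℝ) * ((M:ℝ) - 2) * ((M:ℝ) - 2) := by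
      have h' : ((M * (M - 2) * (M - 2) : ℕ) : ℝ) = (M:ℝ) * ((M:ℝ) - 2) * ((M:ℝ) - 2) := by
        push_cast [Nat.cast_sub (by omega : 2 ≤ M)]
        ring
      rw [← h']
      exact_mod_cast hb
    nlinarith
end

section
/- (Bound on the contour dressing factor) There is a constant C>0 such that, if z k² is sufficiently small, then for every q∈{1,2,3} and every contour γ: exp(−∫_{Ω^q_Λ} dP φ^T(P) z^{|P|} F_γ(P)) ≤ e^{C z²k⁵ |Γ_γ'|}, where the integral is over finite type-q plate configurations in Λ, |Γ_γ'| is the number of blocks of the support Γ_γ, and z²k⁵ = (zk³)(zk²). -/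
open MeasureTheory Filter

attribute [local instance] Classical.propDecidable

noncomputable section
attribute [local instance] Classical.propDecidable
namespace DressAux

variable {V : Type*} [Fintype V] [DecidableEq V]
set_option linter.unusedSectionVars false

/-- connectivity relation generated by a labelling `κ` and an edge set `E` -/
def crel (κ : V → V) (E : Finset (V × V)) (x y : V) : Prop :=
  κ x = κ y ∨ (x, y) ∈ E ∨ (y, x) ∈ E

def CConn (κ : V → V) (E : Finset (V × V)) : Prop :=
  ∀ a b : V, Relation.ReflTransGen (crel κ E) a b

noncomputable def Wf (κ : V → V) (G : Finset (V × V)) : ℝ :=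
  ∑ E ∈ G.powerset, if CConn κ E then (-1 : ℝ) ^ E.card else 0

def nBlocks (κ : V → V) : ℕ := (Finset.univ.image κ).card

noncomputable def treeSet (κ : V → V) (G : Finset (V × V)) : Finset (Finset (V × V)) :=
  G.powerset.filter (fun E => CConn κ E ∧ E.card + 1 = nBlocks κ)

/-- the merged labelling -/
def mergeK (κ : V → V) (e : V × V) : V → V :=
  fun x => if κ x = κ e.2 then κ e.1 else κ x

lemma rtg_bind {r s : V → V → Prop} {a b : V}
    (hr : ∀ x y, r x y → Relation.ReflTransGen s x y)
    (h : Relation.ReflTransGen r a b) : Relation.ReflTransGen s a b := by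
  induction h with
  | refl => exact .refl
  | tail _ hstep ih => exact ih.trans (hr _ _ hstep)


lemma crel_symm (κ : V → V) (E : Finset (V × V)) {x y : V} (h : crel κ E x y) :
    crel κ E y x := by
  rcases h with h | h | h
  · exact Or.inl h.symm
  · exact Or.inr (Or.inr h)
  · exact Or.inr (Or.inl h)

lemma cconn_insert_iff (κ : V → V) (e : V × V) (S : Finset (V × V)) :
    CConn κ (insert e S) ↔ CConn (mergeK κ e) S := by
  constructor
  · intro h a b
    refine rtg_bind (fun x y hxy => ?_) (h a b)
    rcases hxy with hk | hm | hm
    · exact .single (Or.inl (by simp [mergeK, hk]))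
    · rcases Finset.mem_insert.1 hm with rfl | hm
      · exact .single (Or.inl (by simp [mergeK]))
      · exact .single (Or.inr (Or.inl hm))
    · rcases Finset.mem_insert.1 hm with rfl | hm
      · exact .single (Or.inl (by simp [mergeK]))
      · exact .single (Or.inr (Or.inr hm))
  · intro h a b
    refine rtg_bind (fun x y hxy => ?_) (h a b)
    have estep : Relation.ReflTransGen (crel κ (insert e S)) e.1 e.2 :=
      .single (Or.inr (Or.inl (Finset.mem_insert_self e S)))
    rcases hxy with hk | hm | hm
    · unfold mergeK at hk
      by_cases hx : κ x = κ e.2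
      · by_cases hy : κ y = κ e.2
        · exact .single (Or.inl (hx.trans hy.symm))
        · rw [if_pos hx, if_neg hy] at hk
          have s1 : Relation.ReflTransGen (crel κ (insert e S)) x e.2 :=
            .single (Or.inl hx)
          have s2 : Relation.ReflTransGen (crel κ (insert e S)) e.2 e.1 :=
            .single (crel_symm _ _ (Or.inr (Or.inl (Finset.mem_insert_self e S))))
          have s3 : Relation.ReflTransGen (crel κ (insert e S)) e.1 y :=
            .single (Or.inl hk)
          exact (s1.trans s2).trans s3
      · by_cases hy : κ y = κ e.2
        · rw [if_neg hx, if_pos hy] at hk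
          have s1 : Relation.ReflTransGen (crel κ (insert e S)) x e.1 :=
            .single (Or.inl hk)
          have s3 : Relation.ReflTransGen (crel κ (insert e S)) e.2 y :=
            .single (Or.inl hy.symm)
          exact (s1.trans estep).trans s3
        · rw [if_neg hx, if_neg hy] at hk
          exact .single (Or.inl hk)
    · exact .single (Or.inr (Or.inl (Finset.mem_insert_of_mem hm)))
    · exact .single (Or.inr (Or.inr (Finset.mem_insert_of_mem hm)))


lemma cconn_of_loops {κ : V → V} {G E : Finset (V × V)}
    (hG : ∀ g ∈ G, κ g.1 = κ g.2) (hE : E ⊆ G) :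
    CConn κ E ↔ CConn κ (∅ : Finset (V × V)) := by
  constructor
  · intro h a b
    refine rtg_bind (fun x y hxy => ?_) (h a b)
    rcases hxy with hk | hm | hm
    · exact .single (Or.inl hk)
    · exact .single (Or.inl (hG _ (hE hm)))
    · exact .single (Or.inl (hG _ (hE hm)).symm)
  · intro h a b
    refine rtg_bind (fun x y hxy => ?_) (h a b)
    rcases hxy with hk | hm | hm
    · exact .single (Or.inl hk)
    · exact absurd hm (by simp)
    · exact absurd hm (by simp)

lemma kconst_of_cconn_empty [Nonempty V] {κ : V → V}
    (h : CConn κ (∅ : Finset (V × V))) : ∀ a b : V, κ a = κ b := by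
  intro a b
  have := h a b
  induction this with
  | refl => rfl
  | tail _ hstep ih =>
      rcases hstep with hk | hm | hm
      · exact ih.trans hk
      · exact absurd hm (by simp)
      · exact absurd hm (by simp)

lemma nBlocks_eq_one [Nonempty V] {κ : V → V}
    (h : CConn κ (∅ : Finset (V × V))) : nBlocks κ = 1 := by
  obtain ⟨v⟩ := ‹Nonempty V›
  have : Finset.univ.image κ = {κ v} := by
    apply Finset.eq_singleton_iff_unique_mem.2
    refine ⟨Finset.mem_image_of_mem _ (Finset.mem_univ v), ?_⟩
    intro x hx
    rcases Finset.mem_image.1 hx with ⟨a, _, rfl⟩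
    exact kconst_of_cconn_empty h a v
  rw [nBlocks, this, Finset.card_singleton]

lemma image_mergeK {κ : V → V} {e : V × V} (he : κ e.1 ≠ κ e.2) :
    Finset.univ.image (mergeK κ e) = (Finset.univ.image κ).erase (κ e.2) := by
  ext t
  simp only [Finset.mem_image, Finset.mem_erase, Finset.mem_univ, true_and]
  constructor
  · rintro ⟨a, rfl⟩
    unfold mergeK
    by_cases ha : κ a = κ e.2
    · rw [if_pos ha]; exact ⟨he, ⟨e.1, rfl⟩⟩
    · rw [if_neg ha]; exact ⟨ha, ⟨a, rfl⟩⟩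
  · rintro ⟨ht, a, rfl⟩
    exact ⟨a, by unfold mergeK; rw [if_neg ht]⟩

lemma nBlocks_mergeK {κ : V → V} {e : V × V} (he : κ e.1 ≠ κ e.2) :
    nBlocks (mergeK κ e) + 1 = nBlocks κ := by
  unfold nBlocks
  rw [image_mergeK he]
  rw [Finset.card_erase_of_mem (Finset.mem_image_of_mem _ (Finset.mem_univ e.2))]
  have : 0 < (Finset.univ.image κ).card :=
    Finset.card_pos.2 ⟨κ e.2, Finset.mem_image_of_mem _ (Finset.mem_univ e.2)⟩
  omega

lemma treeSet_superadd {κ : V → V} {G : Finset (V × V)} {e : V × V}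
    (heG : e ∈ G) (he : κ e.1 ≠ κ e.2) :
    (treeSet κ (G.erase e)).card + (treeSet (mergeK κ e) (G.erase e)).card
      ≤ (treeSet κ G).card := by
  classical
  set A := treeSet κ (G.erase e)
  set B := (treeSet (mergeK κ e) (G.erase e)).image (insert e)
  have hBcard : B.card = (treeSet (mergeK κ e) (G.erase e)).card := by
    apply Finset.card_image_of_injOn
    intro E1 h1 E2 h2 hins
    have he1 : e ∉ E1 := fun hc => (Finset.mem_erase.1
      ((Finset.mem_powerset.1 (Finset.mem_filter.1 h1).1) hc)).1 rfl
    have he2 : e ∉ E2 := fun hc => (Finset.mem_erase.1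
      ((Finset.mem_powerset.1 (Finset.mem_filter.1 h2).1) hc)).1 rfl
    have := congrArg (fun s => Finset.erase s e) hins
    simpa [Finset.erase_insert he1, Finset.erase_insert he2] using this
  have hAB : Disjoint A B := by
    rw [Finset.disjoint_left]
    intro E hA hB
    rcases Finset.mem_image.1 hB with ⟨E', _, rfl⟩
    have : e ∈ insert e E' := Finset.mem_insert_self e E'
    have hsub := Finset.mem_powerset.1 (Finset.mem_filter.1 hA).1
    exact (Finset.mem_erase.1 (hsub this)).1 rfl
  have hsub : A ∪ B ⊆ treeSet κ G := by
    intro E hE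
    rcases Finset.mem_union.1 hE with hE | hE
    · have h := Finset.mem_filter.1 hE
      refine Finset.mem_filter.2 ⟨Finset.mem_powerset.2
        ((Finset.mem_powerset.1 h.1).trans (Finset.erase_subset e G)), h.2⟩
    · rcases Finset.mem_image.1 hE with ⟨E', hE', rfl⟩
      have h := Finset.mem_filter.1 hE'
      have hsubE : E' ⊆ G.erase e := Finset.mem_powerset.1 h.1
      have heE' : e ∉ E' := fun hc => (Finset.mem_erase.1 (hsubE hc)).1 rfl
      refine Finset.mem_filter.2 ⟨Finset.mem_powerset.2 ?_, ?_, ?_⟩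
      · exact Finset.insert_subset heG (hsubE.trans (Finset.erase_subset e G))
      · exact (cconn_insert_iff κ e E').2 h.2.1
      · rw [Finset.card_insert_of_notMem heE']
        have := h.2.2
        have hnb := nBlocks_mergeK he
        omega
  calc A.card + (treeSet (mergeK κ e) (G.erase e)).card
      = A.card + B.card := by rw [hBcard]
    _ = (A ∪ B).card := (Finset.card_union_of_disjoint hAB).symm
    _ ≤ (treeSet κ G).card := Finset.card_le_card hsub

theorem abs_Wf_le [Nonempty V] (G : Finset (V × V)) :
    ∀ κ : V → V, |Wf κ G| ≤ ((treeSet κ G).card : ℝ) := by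
  induction G using Finset.strongInduction with
  | _ G ih =>
    intro κ
    by_cases hloop : ∃ e ∈ G, κ e.1 ≠ κ e.2
    · obtain ⟨e, heG, he⟩ := hloop
      have hG : G = insert e (G.erase e) := (Finset.insert_erase heG).symm
      have hnot : e ∉ G.erase e := Finset.notMem_erase e G
      have hsplit : Wf κ G = Wf κ (G.erase e) - Wf (mergeK κ e) (G.erase e) := by
        have h2 : ∑ S ∈ (G.erase e).powerset,
            (if CConn κ (insert e S) then (-1 : ℝ) ^ (insert e S).card else 0)
            = -Wf (mergeK κ e) (G.erase e) := by
          rw [Wf, ← Finset.sum_neg_distrib]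
          apply Finset.sum_congr rfl
          intro S hS
          have heS : e ∉ S := fun hc =>
            hnot ((Finset.mem_powerset.1 hS) hc)
          rw [Finset.card_insert_of_notMem heS]
          rw [cconn_insert_iff κ e S]
          by_cases h : CConn (mergeK κ e) S
          · rw [if_pos h, if_pos h, pow_succ]; ring
          · rw [if_neg h, if_neg h, neg_zero]
        have expand : Wf κ G = Wf κ (G.erase e) +
            ∑ S ∈ (G.erase e).powerset,
              (if CConn κ (insert e S) then (-1 : ℝ) ^ (insert e S).card else 0) := by
          conv_lhs => rw [Wf, hG]
          rw [Finset.sum_powerset_insert hnot]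
          rfl
        rw [expand, h2]; ring
      rw [hsplit]
      calc |Wf κ (G.erase e) - Wf (mergeK κ e) (G.erase e)|
          ≤ |Wf κ (G.erase e)| + |Wf (mergeK κ e) (G.erase e)| := abs_sub _ _
        _ ≤ ((treeSet κ (G.erase e)).card : ℝ)
              + ((treeSet (mergeK κ e) (G.erase e)).card : ℝ) := by
            have h1 := ih (G.erase e) (Finset.erase_ssubset heG) κ
            have h2 := ih (G.erase e) (Finset.erase_ssubset heG) (mergeK κ e)
            linarith
        _ ≤ ((treeSet κ G).card : ℝ) := by
            have := treeSet_superadd heG he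
            exact_mod_cast this
    · push_neg at hloop
      have hcond : ∀ E ∈ G.powerset, (CConn κ E ↔ CConn κ (∅ : Finset (V × V))) :=
        fun E hE => cconn_of_loops hloop (Finset.mem_powerset.1 hE)
      by_cases hc : CConn κ (∅ : Finset (V × V))
      · have hW : Wf κ G = ∑ E ∈ G.powerset, (-1 : ℝ) ^ E.card := by
          apply Finset.sum_congr rfl
          intro E hE
          rw [if_pos ((hcond E hE).2 hc)]
        by_cases hG : G = ∅
        · subst hG
          have : Wf κ (∅ : Finset (V × V)) = 1 := by
            rw [hW, Finset.powerset_empty, Finset.sum_singleton, Finset.card_empty,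
              pow_zero]
          rw [this]
          have : (∅ : Finset (V × V)) ∈ treeSet κ (∅ : Finset (V × V)) := by
            refine Finset.mem_filter.2 ⟨by simp, hc, ?_⟩
            rw [nBlocks_eq_one hc, Finset.card_empty]
          have hpos : 0 < (treeSet κ (∅ : Finset (V × V))).card :=
            Finset.card_pos.2 ⟨_, this⟩
          rw [abs_one]
          exact_mod_cast hpos
        · have : Wf κ G = 0 := by
            rw [hW]
            have := Finset.sum_powerset_neg_one_pow_card (x := G) (α := V × V)
            rw [if_neg hG] at this
            exact_mod_cast this
          rw [this, abs_zero]
          positivity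
      · have : Wf κ G = 0 := by
          apply Finset.sum_eq_zero
          intro E hE
          rw [if_neg (fun h => hc ((hcond E hE).1 h))]
        rw [this, abs_zero]
        positivity

end DressAux

namespace DressAux2
open scoped ENNReal
set_option maxHeartbeats 1600000
open DressAux

variable (k α : ℝ)

lemma intersects_symm {p p' : Plate} (h : Intersects k α p p') : Intersects k α p' p := by
  rcases h with ⟨y, hy1, hy2⟩; exact ⟨y, hy2, hy1⟩

/-- the intersection graph of a plate configuration, as a sorted edge set -/
def Gp {N : ℕ} (p : Fin N → Plate) : Finset (Fin N × Fin N) :=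
  Finset.univ.filter (fun e => e.1 < e.2 ∧ Intersects k α (p e.1) (p e.2))

lemma cconn_id_iff {N : ℕ} [NeZero N] (E : Finset (Fin N × Fin N)) :
    (SimpleGraph.fromRel (fun i j => (i, j) ∈ E)).Connected ↔ CConn id E := by
  constructor
  · intro h a b
    have hr := h.preconnected a b
    rw [SimpleGraph.reachable_iff_reflTransGen] at hr
    refine rtg_bind (fun x y hxy => ?_) hr
    rcases hxy with ⟨-, hm | hm⟩
    · exact .single (Or.inr (Or.inl hm))
    · exact .single (Or.inr (Or.inr hm))
  · intro h
    refine ⟨fun a b => ?_⟩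
    have hab := h a b
    induction hab with
    | refl => exact SimpleGraph.Reachable.refl _
    | @tail x y _ hstep ih =>
        rcases hstep with hk | hm | hm
        · exact (show x = y from hk) ▸ ih
        · by_cases hxy : x = y
          · exact hxy ▸ ih
          · exact ih.trans (SimpleGraph.Adj.reachable ⟨hxy, Or.inl hm⟩)
        · by_cases hxy : x = y
          · exact hxy ▸ ih
          · exact ih.trans (SimpleGraph.Adj.reachable ⟨hxy, Or.inr hm⟩)

lemma ursell_eq_Wf {N : ℕ} [NeZero N] (p : Fin N → Plate) :
    ursell k α p = Wf id (Gp k α p) := by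
  rw [ursell, Wf]
  have hterm : ∀ E : Finset (Fin N × Fin N),
      (if (∀ e ∈ E, e.1 < e.2) ∧
          (SimpleGraph.fromRel (fun i j => (i, j) ∈ E)).Connected then
        ∏ e ∈ E, (phi2 k α (p e.1) (p e.2) - 1)
      else 0)
      = (if E ∈ (Gp k α p).powerset then (if CConn id E then (-1 : ℝ) ^ E.card else 0)
         else 0) := by
    intro E
    by_cases hsub : E ∈ (Gp k α p).powerset
    · have hsub' := Finset.mem_powerset.1 hsub
      have hwf : ∀ e ∈ E, e.1 < e.2 := by
        intro e he
        exact ((Finset.mem_filter.1 (hsub' he)).2).1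
      rw [if_pos hsub]
      by_cases hcc : CConn id E
      · rw [if_pos ⟨hwf, (cconn_id_iff E).2 hcc⟩, if_pos hcc]
        have : ∀ e ∈ E, phi2 k α (p e.1) (p e.2) - 1 = -1 := by
          intro e he
          have hint := ((Finset.mem_filter.1 (hsub' he)).2).2
          rw [phi2, if_pos hint]; ring
        rw [Finset.prod_congr rfl this, Finset.prod_const]
      · rw [if_neg hcc, if_neg (fun hc => hcc ((cconn_id_iff E).1 hc.2))]
    · rw [if_neg hsub]
      by_cases hcond : (∀ e ∈ E, e.1 < e.2) ∧
          (SimpleGraph.fromRel (fun i j => (i, j) ∈ E)).Connected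
      · rw [if_pos hcond]
        have : ∃ e ∈ E, e ∉ Gp k α p := by
          by_contra hcon
          push_neg at hcon
          exact hsub (Finset.mem_powerset.2 hcon)
        obtain ⟨e, heE, heG⟩ := this
        apply Finset.prod_eq_zero heE
        have : ¬ Intersects k α (p e.1) (p e.2) := by
          intro hint
          exact heG (Finset.mem_filter.2 ⟨Finset.mem_univ e, hcond.1 e heE, hint⟩)
        rw [phi2, if_neg this]; ring
      · rw [if_neg hcond]
  rw [Finset.sum_congr rfl (fun E _ => hterm E)]
  rw [Finset.sum_ite_mem]
  rw [Finset.univ_inter]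

/-- acyclicity of a parent map over a set of vertices -/
def NoCyc {N : ℕ} (ρ : Fin N → Fin N) (r : Fin N) : Prop :=
  ∀ t : Finset (Fin N), t ⊆ Finset.univ.erase r → t.Nonempty → ∃ v ∈ t, ρ v ∉ t

/-- the parent map of an edge set, pointing towards the root `r` -/
noncomputable def parentMap {N : ℕ} (E : Finset (Fin N × Fin N)) (r : Fin N) :
    Fin N → Fin N := fun v =>
  if h : ∃ u, (SimpleGraph.fromRel (fun i j => (i, j) ∈ E)).Adj v u ∧
      (SimpleGraph.fromRel (fun i j => (i, j) ∈ E)).dist u r <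
        (SimpleGraph.fromRel (fun i j => (i, j) ∈ E)).dist v r
  then h.choose else r

lemma parent_exists {N : ℕ} {E : Finset (Fin N × Fin N)} {r v : Fin N}
    (hconn : (SimpleGraph.fromRel (fun i j => (i, j) ∈ E)).Connected)
    (hv : v ≠ r) :
    ∃ u, (SimpleGraph.fromRel (fun i j => (i, j) ∈ E)).Adj v u ∧
      (SimpleGraph.fromRel (fun i j => (i, j) ∈ E)).dist u r <
        (SimpleGraph.fromRel (fun i j => (i, j) ∈ E)).dist v r := by
  set H := SimpleGraph.fromRel (fun i j => (i, j) ∈ E)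
  have hr : H.Reachable v r := hconn.preconnected v r
  obtain ⟨w, hw⟩ := hr.exists_walk_length_eq_dist
  cases w with
  | nil => exact absurd rfl hv
  | cons hadj q =>
      rename_i u
      refine ⟨u, hadj, ?_⟩
      have h1 : H.dist u r ≤ q.length := SimpleGraph.dist_le q
      have h2 : q.length + 1 = H.dist v r := by
        simpa [SimpleGraph.Walk.length_cons] using hw
      omega

lemma parentMap_spec {N : ℕ} {E : Finset (Fin N × Fin N)} {r v : Fin N}
    (hconn : (SimpleGraph.fromRel (fun i j => (i, j) ∈ E)).Connected)
    (hv : v ≠ r) :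
    (SimpleGraph.fromRel (fun i j => (i, j) ∈ E)).Adj v (parentMap E r v) ∧
      (SimpleGraph.fromRel (fun i j => (i, j) ∈ E)).dist (parentMap E r v) r <
        (SimpleGraph.fromRel (fun i j => (i, j) ∈ E)).dist v r := by
  rw [parentMap, dif_pos (parent_exists hconn hv)]
  exact (parent_exists hconn hv).choose_spec

lemma parentMap_noCyc {N : ℕ} {E : Finset (Fin N × Fin N)} {r : Fin N}
    (hconn : (SimpleGraph.fromRel (fun i j => (i, j) ∈ E)).Connected) :
    NoCyc (parentMap E r) r := by
  intro t ht htne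
  obtain ⟨v, hvt, hvmin⟩ := Finset.exists_min_image t
    (fun v => (SimpleGraph.fromRel (fun i j => (i, j) ∈ E)).dist v r) htne
  refine ⟨v, hvt, fun hρt => ?_⟩
  have hv : v ≠ r := (Finset.mem_erase.1 (ht hvt)).1
  have h1 := (parentMap_spec hconn hv).2
  have h2 := hvmin _ hρt
  omega

/-- a sorted pair -/
def sortP {N : ℕ} (v u : Fin N) : Fin N × Fin N := if v < u then (v, u) else (u, v)

lemma parentMap_edge {N : ℕ} {p : Fin N → Plate} {E : Finset (Fin N × Fin N)}
    {r v : Fin N} (hsub : E ⊆ Gp k α p)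
    (hconn : (SimpleGraph.fromRel (fun i j => (i, j) ∈ E)).Connected)
    (hv : v ≠ r) : sortP v (parentMap E r v) ∈ E := by
  obtain ⟨hadj, -⟩ := parentMap_spec hconn hv
  rcases hadj with ⟨hne, hm | hm⟩
  · have := ((Finset.mem_filter.1 (hsub hm)).2).1
    rw [sortP, if_pos this]; exact hm
  · have hlt : parentMap E r v < v := ((Finset.mem_filter.1 (hsub hm)).2).1
    rw [sortP, if_neg (lt_asymm hlt)]; exact hm

lemma parentMap_intersects {N : ℕ} {p : Fin N → Plate} {E : Finset (Fin N × Fin N)}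
    {r v : Fin N} (hsub : E ⊆ Gp k α p)
    (hconn : (SimpleGraph.fromRel (fun i j => (i, j) ∈ E)).Connected)
    (hv : v ≠ r) : Intersects k α (p v) (p (parentMap E r v)) := by
  obtain ⟨hadj, -⟩ := parentMap_spec hconn hv
  rcases hadj with ⟨hne, hm | hm⟩
  · exact ((Finset.mem_filter.1 (hsub hm)).2).2
  · exact intersects_symm k α ((Finset.mem_filter.1 (hsub hm)).2).2

lemma treeSet_card_le {N : ℕ} [NeZero N] (p : Fin N → Plate) (r : Fin N) :
    (treeSet id (Gp k α p)).card ≤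
      (Finset.univ.filter (fun ρ : Fin N → Fin N =>
        NoCyc ρ r ∧ ∀ v, v ≠ r → Intersects k α (p v) (p (ρ v)))).card := by
  apply Finset.card_le_card_of_injOn (fun E => parentMap E r)
  · intro E hE
    have hmem := Finset.mem_filter.1 hE
    have hsub : E ⊆ Gp k α p := Finset.mem_powerset.1 hmem.1
    have hconn : (SimpleGraph.fromRel (fun i j => (i, j) ∈ E)).Connected :=
      (cconn_id_iff E).2 hmem.2.1
    refine Finset.mem_filter.2 ⟨Finset.mem_univ _, parentMap_noCyc hconn,
      fun v hv => parentMap_intersects k α hsub hconn hv⟩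
  · intro E1 hE1 E2 hE2 heq
    have hE1 := Finset.mem_coe.1 hE1
    have hE2 := Finset.mem_coe.1 hE2
    have key : ∀ E ∈ treeSet id (Gp k α p),
        E = (Finset.univ.erase r).image (fun v => sortP v (parentMap E r v)) := by
      intro E hE
      have hmem := Finset.mem_filter.1 hE
      have hsub : E ⊆ Gp k α p := Finset.mem_powerset.1 hmem.1
      have hconn : (SimpleGraph.fromRel (fun i j => (i, j) ∈ E)).Connected :=
        (cconn_id_iff E).2 hmem.2.1
      have hcard : E.card + 1 = N := by
        have := hmem.2.2
        rwa [nBlocks, Finset.image_id, Finset.card_univ, Fintype.card_fin] at this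
      have himg : (Finset.univ.erase r).image
          (fun v => sortP v (parentMap E r v)) ⊆ E := by
        intro x hx
        rcases Finset.mem_image.1 hx with ⟨v, hv, rfl⟩
        exact parentMap_edge k α hsub hconn (Finset.mem_erase.1 hv).1
      have hinj : Set.InjOn (fun v => sortP v (parentMap E r v))
          (Finset.univ.erase r) := by
        intro v hv w hw hvw
        by_contra hne
        set H := SimpleGraph.fromRel (fun i j => (i, j) ∈ E)
        have hv' : v ≠ r := (Finset.mem_erase.1 (Finset.mem_coe.1 hv)).1
        have hw' : w ≠ r := (Finset.mem_erase.1 (Finset.mem_coe.1 hw)).1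
        have hcross : v = parentMap E r w ∧ w = parentMap E r v := by
          simp only [sortP] at hvw
          split_ifs at hvw with h1 h2 h2
          · exact absurd (Prod.ext_iff.1 hvw).1 hne
          · obtain ⟨ha, hb⟩ := Prod.ext_iff.1 hvw
            exact ⟨ha, hb.symm⟩
          · obtain ⟨ha, hb⟩ := Prod.ext_iff.1 hvw
            exact ⟨hb, ha.symm⟩
          · exact absurd (Prod.ext_iff.1 hvw).2 hne
        have d1 := (parentMap_spec hconn hv').2
        have d2 := (parentMap_spec hconn hw').2
        rw [← hcross.2] at d1
        rw [← hcross.1] at d2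
        omega
      have hcardimg : ((Finset.univ.erase r).image
          (fun v => sortP v (parentMap E r v))).card = N - 1 := by
        rw [Finset.card_image_of_injOn hinj, Finset.card_erase_of_mem (Finset.mem_univ r),
          Finset.card_univ, Fintype.card_fin]
      exact (Finset.eq_of_subset_of_card_le himg (by omega)).symm
    have h1 := key E1 hE1
    have h2 := key E2 hE2
    have heq' : parentMap E1 r = parentMap E2 r := heq
    rw [h1, h2, heq']

/-! ### Geometry -/

lemma sideLen_le {k α : ℝ} (hk : 1 ≤ k) (hα : α ≤ 1) (o : Orient) (j : Fin 3) :
    sideLen k α o j ≤ k := by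
  have hpow : k ^ α ≤ k := by
    have := Real.rpow_le_rpow_of_exponent_le hk hα
    rwa [Real.rpow_one] at this
  unfold sideLen
  split_ifs <;> first | exact hk | exact hpow | exact le_refl k

lemma sideLen_axis (k α : ℝ) (q : Fin 3) (b : Bool) : sideLen k α (q, b) q = 1 := by
  unfold sideLen; rw [if_pos rfl]

lemma intersects_center_close {k α : ℝ} (hk : 1 ≤ k) (hα : α ≤ 1) {p p' : Plate}
    (h : Intersects k α p p') (j : Fin 3) : |p.1 j - p'.1 j| ≤ k := by
  obtain ⟨y, hy, hy'⟩ := h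
  have h1 := hy j
  have h2 := hy' j
  have b1 := sideLen_le hk hα p.2 j
  have b2 := sideLen_le hk hα p'.2 j
  have htri : |p.1 j - p'.1 j| ≤ |p.1 j - y j| + |y j - p'.1 j| := abs_sub_le _ _ _
  rw [abs_sub_comm (p.1 j) (y j)] at htri
  linarith

lemma intersects_axis_close {k α : ℝ} {q : Fin 3} {b b' : Bool} {y y' : Pt}
    (h : Intersects k α (y, (q, b)) (y', (q, b'))) : |y q - y' q| ≤ 1 := by
  obtain ⟨z, hz, hz'⟩ := h
  have h1 := hz q
  have h2 := hz' q
  rw [show ((y, (q, b)) : Plate).2 = (q, b) from rfl, sideLen_axis] at h1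
  rw [show ((y', (q, b')) : Plate).2 = (q, b') from rfl, sideLen_axis] at h2
  have htri : |y q - y' q| ≤ |y q - z q| + |z q - y' q| := abs_sub_le _ _ _
  rw [abs_sub_comm (y q) (z q)] at htri
  have : ((y, (q, b)) : Plate).1 = y := rfl
  simp only [this] at h1
  have : ((y', (q, b')) : Plate).1 = y' := rfl
  simp only [this] at h2
  linarith

def bigBox (k : ℝ) (ξ : I3) : Set Pt :=
  Set.univ.pi fun j => Set.Icc ((k/2) * (ξ j : ℝ) - k) ((k/2) * ((ξ j : ℝ) + 1) + k)

def anchorSet (k : ℝ) (Γ : Finset I3) : Set Pt := ⋃ ξ ∈ Γ, bigBox k ξ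

lemma bigBox_measurable (k : ℝ) (ξ : I3) : MeasurableSet (bigBox k ξ) :=
  MeasurableSet.univ_pi fun _ => measurableSet_Icc

lemma anchorSet_measurable (k : ℝ) (Γ : Finset I3) : MeasurableSet (anchorSet k Γ) :=
  Finset.measurableSet_biUnion Γ fun ξ _ => bigBox_measurable k ξ

lemma mem_anchor_of_close {k : ℝ} (hk : 0 < k) {Γ : Finset I3} {c y : Pt}
    (hc : blockIdx (k/2) c ∈ Γ) (hclose : ∀ j, |y j - c j| ≤ k) :
    y ∈ anchorSet k Γ := by
  refine Set.mem_biUnion hc ?_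
  rw [bigBox, Set.mem_univ_pi]
  intro j
  have hk2 : (0:ℝ) < k/2 := by linarith
  have hfl : (blockIdx (k/2) c j : ℝ) ≤ c j / (k/2) := Int.floor_le _
  have hfl2 : c j / (k/2) < (blockIdx (k/2) c j : ℝ) + 1 := Int.lt_floor_add_one _
  have h1 : (k/2) * (blockIdx (k/2) c j : ℝ) ≤ c j := by
    rw [mul_comm]
    exact (le_div_iff₀ hk2).1 hfl
  have h2 : c j < (k/2) * ((blockIdx (k/2) c j : ℝ) + 1) := by
    rw [mul_comm]
    exact (div_lt_iff₀ hk2).1 hfl2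
  have habs := abs_le.1 (hclose j)
  exact ⟨by linarith [habs.1], by linarith [habs.2]⟩

lemma bigBox_vol {k : ℝ} (hk : 0 ≤ k) (ξ : I3) :
    volume (bigBox k ξ) = ENNReal.ofReal ((5*k/2)^3) := by
  rw [bigBox, volume_pi_pi]
  have hv : ∀ j : Fin 3, volume (Set.Icc ((k/2) * (ξ j : ℝ) - k)
      ((k/2) * ((ξ j : ℝ) + 1) + k)) = ENNReal.ofReal (5*k/2) := by
    intro j; rw [Real.volume_Icc]; congr 1; ring
  rw [Fin.prod_univ_three, hv 0, hv 1, hv 2]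
  have h52 : (0:ℝ) ≤ 5*k/2 := by linarith
  rw [← ENNReal.ofReal_mul h52, ← ENNReal.ofReal_mul (by positivity)]
  congr 1; ring

lemma anchor_vol {k : ℝ} (hk : 0 ≤ k) (Γ : Finset I3) :
    volume (anchorSet k Γ) ≤ (Γ.card : ℝ≥0∞) * ENNReal.ofReal ((5*k/2)^3) := by
  refine le_trans (measure_biUnion_finset_le Γ _) ?_
  rw [Finset.sum_congr rfl (fun ξ _ => bigBox_vol hk ξ), Finset.sum_const, nsmul_eq_mul]

lemma Fgam_anchor {k α : ℝ} (hk : 1 < k) (hα : α ≤ 1) {B Γ : Finset I3} {Pγ : List Plate}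
    (hPγ : ∀ p ∈ Pγ, blockIdx (k/2) p.1 ∈ Γ)
    {N : ℕ} {x : Fin N → Pt} {o : Fin N → Orient}
    (hF : FgamL k α B Γ Pγ (mkConf x o) ≠ 0) :
    ∃ i, x i ∈ anchorSet k Γ := by
  rw [FgamL] at hF
  split_ifs at hF with hcond
  · rcases hcond with ⟨p1, hp1, p2, hp2, -, hin⟩ | ⟨p1, hp1, -, p2, hp2, hint⟩
    · rw [mkConf, List.mem_ofFn] at hp2
      obtain ⟨m, rfl⟩ := hp2
      refine ⟨m, mem_anchor_of_close (by linarith) hin (fun j => ?_)⟩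
      simp only [sub_self, abs_zero]
      linarith
    · rw [mkConf, List.mem_ofFn] at hp1
      obtain ⟨m, rfl⟩ := hp1
      exact ⟨m, mem_anchor_of_close (by linarith) (hPγ p2 hp2)
        (fun j => intersects_center_close (le_of_lt hk) hα hint j)⟩
  · exact absurd rfl hF

/-! ### The tree-peeling integral bound -/

def bw (k : ℝ) (q : Fin 3) : Fin 3 → ℝ := fun j => if j = q then 1 else k

def psiCond (k : ℝ) (q : Fin 3) (c y : Pt) : Prop := ∀ j, |y j - c j| ≤ bw k q j

lemma psi_lintegral {k : ℝ} (hk : 0 ≤ k) (q : Fin 3) (c : Pt) :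
    ∫⁻ y : Pt, (if psiCond k q c y then (1:ℝ≥0∞) else 0) = ENNReal.ofReal (8*k^2) := by
  have hset : {y : Pt | psiCond k q c y}
      = Set.univ.pi (fun j => Set.Icc (c j - bw k q j) (c j + bw k q j)) := by
    ext y
    simp only [Set.mem_setOf_eq, Set.mem_pi, Set.mem_univ, true_implies, Set.mem_Icc,
      psiCond]
    refine forall_congr' (fun j => ?_)
    rw [abs_le]
    constructor <;> intro h <;> exact ⟨by linarith [h.1], by linarith [h.2]⟩
  have hind : (fun y : Pt => if psiCond k q c y then (1:ℝ≥0∞) else 0)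
      = Set.indicator {y : Pt | psiCond k q c y} 1 := by
    funext y
    by_cases h : psiCond k q c y
    · rw [if_pos h, Set.indicator_of_mem (show y ∈ {y : Pt | psiCond k q c y} from h)]
      rfl
    · rw [if_neg h,
        Set.indicator_of_notMem (show y ∉ {y : Pt | psiCond k q c y} from h)]
  rw [hind, hset, MeasureTheory.lintegral_indicator_one
    (MeasurableSet.univ_pi fun _ => measurableSet_Icc), volume_pi_pi]
  have hv : ∀ j : Fin 3, volume (Set.Icc (c j - bw k q j) (c j + bw k q j))
      = ENNReal.ofReal (2 * bw k q j) := by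
    intro j; rw [Real.volume_Icc]; congr 1; ring
  have hbwnn : ∀ j, (0:ℝ) ≤ bw k q j := by
    intro j; unfold bw; split_ifs <;> linarith
  rw [Finset.prod_congr rfl (fun j _ => hv j),
    ← ENNReal.ofReal_prod_of_nonneg (fun j _ => by linarith [hbwnn j])]
  congr 1
  have hsplit : ∏ j : Fin 3, (2 * bw k q j)
      = (2 * bw k q q) * ∏ j ∈ Finset.univ.erase q, (2 * bw k q j) :=
    (Finset.mul_prod_erase Finset.univ _ (Finset.mem_univ q)).symm
  rw [hsplit]
  have h1 : bw k q q = 1 := by unfold bw; rw [if_pos rfl]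
  have h2 : ∏ j ∈ Finset.univ.erase q, (2 * bw k q j) = (2*k)^2 := by
    have hc : ∀ j ∈ Finset.univ.erase q, 2 * bw k q j = 2*k := by
      intro j hj
      have hne : j ≠ q := (Finset.mem_erase.1 hj).1
      unfold bw; rw [if_neg hne]
    rw [Finset.prod_congr rfl hc, Finset.prod_const,
      Finset.card_erase_of_mem (Finset.mem_univ q), Finset.card_univ, Fintype.card_fin]
  rw [h1, h2]; ring

lemma psi_measurable {N : ℕ} (k : ℝ) (q : Fin 3) (v u : Fin N) :
    Measurable (fun z : Fin N → Pt =>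
      if psiCond k q (z u) (z v) then (1:ℝ≥0∞) else 0) := by
  refine Measurable.ite ?_ measurable_const measurable_const
  have hset : {z : Fin N → Pt | psiCond k q (z u) (z v)}
      = ⋂ j : Fin 3, {z : Fin N → Pt | |z v j - z u j| ≤ bw k q j} := by
    ext z; simp [psiCond]
  rw [hset]
  refine MeasurableSet.iInter (fun j => ?_)
  have h1 : Measurable (fun z : Fin N → Pt => |z v j - z u j|) :=
    Measurable.abs (f := fun z : Fin N → Pt => z v j - z u j)
      (Measurable.sub (f := fun z : Fin N → Pt => z v j) (g := fun z : Fin N → Pt => z u j)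
        ((measurable_pi_apply j).comp (measurable_pi_apply v))
        ((measurable_pi_apply j).comp (measurable_pi_apply u)))
  exact measurableSet_le h1 measurable_const

lemma updateFinset_off {ι : Type*} {π : ι → Type*} [DecidableEq ι]
    (x : ∀ i, π i) (s : Finset ι) (y : ∀ i : s, π i.1) {i : ι} (h : i ∉ s) :
    Function.updateFinset x s y i = x i := by
  simp [Function.updateFinset, h]

lemma ite_ne_top {P : Prop} [Decidable P] : (if P then (1:ℝ≥0∞) else 0) ≠ ⊤ := by
  split_ifs <;> simp

lemma peel {N : ℕ} {k : ℝ} (hk : 0 ≤ k) (q : Fin 3) (ρ : Fin N → Fin N)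
    (s : Finset (Fin N)) :
    (∀ t ⊆ s, t.Nonempty → ∃ v ∈ t, ρ v ∉ t) →
    ∀ x : Fin N → Pt,
      (∫⋯∫⁻_s, (fun z => ∏ v ∈ s,
        (if psiCond k q (z (ρ v)) (z v) then (1:ℝ≥0∞) else 0))
          ∂(fun _ => (volume : Measure Pt))) x
        ≤ ENNReal.ofReal (8*k^2) ^ s.card := by
  induction s using Finset.strongInduction with
  | _ s ih =>
    intro hnc x
    rcases Finset.eq_empty_or_nonempty s with rfl | hne
    · rw [MeasureTheory.lmarginal_empty]; simp
    · obtain ⟨v₀, hv₀, hρv₀⟩ := hnc s subset_rfl hne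
      have hvne : ρ v₀ ≠ v₀ := fun h => hρv₀ (by rwa [h])
      have hnotmem : v₀ ∉ s.erase v₀ := Finset.notMem_erase _ _
      have hρnot : ρ v₀ ∉ s.erase v₀ := fun hc => hρv₀ (Finset.mem_of_mem_erase hc)
      have hins : s = insert v₀ (s.erase v₀) := (Finset.insert_erase hv₀).symm
      have hss : s.erase v₀ ⊂ s := Finset.erase_ssubset hv₀
      rw [hins]
      have hmeas : Measurable (fun z : Fin N → Pt => ∏ v ∈ insert v₀ (s.erase v₀),
          (if psiCond k q (z (ρ v)) (z v) then (1:ℝ≥0∞) else 0)) :=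
        Finset.measurable_prod _ (fun v _ => psi_measurable k q v (ρ v))
      rw [MeasureTheory.lmarginal_insert _ hmeas hnotmem]
      have key : ∀ y : Pt,
          (∫⋯∫⁻_(s.erase v₀), (fun z => ∏ v ∈ insert v₀ (s.erase v₀),
            (if psiCond k q (z (ρ v)) (z v) then (1:ℝ≥0∞) else 0))
              ∂(fun _ => (volume : Measure Pt))) (Function.update x v₀ y)
          ≤ (if psiCond k q (x (ρ v₀)) y then (1:ℝ≥0∞) else 0)
              * ENNReal.ofReal (8*k^2) ^ (s.erase v₀).card := by
        intro y
        have hfac : (∫⋯∫⁻_(s.erase v₀), (fun z => ∏ v ∈ insert v₀ (s.erase v₀),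
            (if psiCond k q (z (ρ v)) (z v) then (1:ℝ≥0∞) else 0))
              ∂(fun _ => (volume : Measure Pt))) (Function.update x v₀ y)
            = (if psiCond k q (x (ρ v₀)) y then (1:ℝ≥0∞) else 0)
              * (∫⋯∫⁻_(s.erase v₀), (fun z => ∏ v ∈ s.erase v₀,
                (if psiCond k q (z (ρ v)) (z v) then (1:ℝ≥0∞) else 0))
                  ∂(fun _ => (volume : Measure Pt))) (Function.update x v₀ y) := by
          simp only [MeasureTheory.lmarginal]
          rw [← MeasureTheory.lintegral_const_mul' _ _ ite_ne_top]
          refine lintegral_congr (fun w => ?_)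
          rw [Finset.prod_insert hnotmem]
          congr 1
          rw [updateFinset_off _ _ _ hρnot, Function.update_of_ne hvne,
            updateFinset_off _ _ _ hnotmem, Function.update_self]
        rw [hfac]
        exact mul_le_mul_right (ih (s.erase v₀) hss (fun t ht htne =>
          hnc t (ht.trans (Finset.erase_subset _ _)) htne) _) _
      calc ∫⁻ y, (∫⋯∫⁻_(s.erase v₀), (fun z => ∏ v ∈ insert v₀ (s.erase v₀),
            (if psiCond k q (z (ρ v)) (z v) then (1:ℝ≥0∞) else 0))
              ∂(fun _ => (volume : Measure Pt))) (Function.update x v₀ y)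
          ≤ ∫⁻ y, (if psiCond k q (x (ρ v₀)) y then (1:ℝ≥0∞) else 0)
              * ENNReal.ofReal (8*k^2) ^ (s.erase v₀).card :=
            lintegral_mono key
        _ = ENNReal.ofReal (8*k^2) * ENNReal.ofReal (8*k^2) ^ (s.erase v₀).card := by
            rw [MeasureTheory.lintegral_mul_const' _ _
              (ENNReal.pow_ne_top ENNReal.ofReal_ne_top), psi_lintegral hk]
        _ = ENNReal.ofReal (8*k^2) ^ (insert v₀ (s.erase v₀)).card := by
            rw [Finset.card_insert_of_notMem hnotmem, pow_succ]
            ring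


lemma anchored_tree_integral {N : ℕ} {k : ℝ} (hk : 0 ≤ k) (q : Fin 3)
    (A : Set Pt) (hA : MeasurableSet A) (r : Fin N) (ρ : Fin N → Fin N)
    (hnc : ∀ t ⊆ Finset.univ.erase r, t.Nonempty → ∃ v ∈ t, ρ v ∉ t) :
    ∫⁻ z : Fin N → Pt, (if z r ∈ A then (1:ℝ≥0∞) else 0)
        * ∏ v ∈ Finset.univ.erase r,
          (if psiCond k q (z (ρ v)) (z v) then (1:ℝ≥0∞) else 0)
      ≤ volume A * ENNReal.ofReal (8*k^2) ^ (N - 1) := by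
  have hx₀ : (Fin N → Pt) := fun _ _ => 0
  have hmeasA : Measurable (fun z : Fin N → Pt => if z r ∈ A then (1:ℝ≥0∞) else 0) := by
    refine Measurable.ite ?_ measurable_const measurable_const
    exact (measurable_pi_apply r) hA
  have hmeasP : Measurable (fun z : Fin N → Pt => ∏ v ∈ Finset.univ.erase r,
      (if psiCond k q (z (ρ v)) (z v) then (1:ℝ≥0∞) else 0)) :=
    Finset.measurable_prod _ (fun v _ => psi_measurable k q v (ρ v))
  have hmeas : Measurable (fun z : Fin N → Pt => (if z r ∈ A then (1:ℝ≥0∞) else 0)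
      * ∏ v ∈ Finset.univ.erase r,
        (if psiCond k q (z (ρ v)) (z v) then (1:ℝ≥0∞) else 0)) := hmeasA.mul hmeasP
  have hvol : (volume : Measure (Fin N → Pt)) = Measure.pi (fun _ => volume) :=
    MeasureTheory.volume_pi
  rw [hvol, MeasureTheory.lintegral_eq_lmarginal_univ hx₀]
  have hrnot : r ∉ Finset.univ.erase r := Finset.notMem_erase _ _
  have huniv : (Finset.univ : Finset (Fin N)) = insert r (Finset.univ.erase r) :=
    (Finset.insert_erase (Finset.mem_univ r)).symm
  have hstep := MeasureTheory.lmarginal_insert (μ := fun _ => (volume : Measure Pt))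
    _ hmeas hrnot (x := hx₀)
  rw [← huniv] at hstep
  rw [hstep]
  have key : ∀ y : Pt,
      (∫⋯∫⁻_(Finset.univ.erase r), (fun z => (if z r ∈ A then (1:ℝ≥0∞) else 0)
        * ∏ v ∈ Finset.univ.erase r,
          (if psiCond k q (z (ρ v)) (z v) then (1:ℝ≥0∞) else 0))
          ∂(fun _ => (volume : Measure Pt))) (Function.update hx₀ r y)
      ≤ (if y ∈ A then (1:ℝ≥0∞) else 0)
          * ENNReal.ofReal (8*k^2) ^ (Finset.univ.erase r).card := by
    intro y
    have hfac : (∫⋯∫⁻_(Finset.univ.erase r), (fun z => (if z r ∈ A then (1:ℝ≥0∞) else 0)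
        * ∏ v ∈ Finset.univ.erase r,
          (if psiCond k q (z (ρ v)) (z v) then (1:ℝ≥0∞) else 0))
          ∂(fun _ => (volume : Measure Pt))) (Function.update hx₀ r y)
        = (if y ∈ A then (1:ℝ≥0∞) else 0)
          * (∫⋯∫⁻_(Finset.univ.erase r), (fun z => ∏ v ∈ Finset.univ.erase r,
            (if psiCond k q (z (ρ v)) (z v) then (1:ℝ≥0∞) else 0))
              ∂(fun _ => (volume : Measure Pt))) (Function.update hx₀ r y) := by
      simp only [MeasureTheory.lmarginal]
      rw [← MeasureTheory.lintegral_const_mul' _ _ ite_ne_top]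
      refine lintegral_congr (fun w => ?_)
      congr 2
      rw [updateFinset_off _ _ _ hrnot, Function.update_self]
    rw [hfac]
    exact mul_le_mul_right (peel hk q ρ (Finset.univ.erase r) hnc _) _
  calc ∫⁻ y, (∫⋯∫⁻_(Finset.univ.erase r), (fun z => (if z r ∈ A then (1:ℝ≥0∞) else 0)
        * ∏ v ∈ Finset.univ.erase r,
          (if psiCond k q (z (ρ v)) (z v) then (1:ℝ≥0∞) else 0))
          ∂(fun _ => (volume : Measure Pt))) (Function.update hx₀ r y)
      ≤ ∫⁻ y, (if y ∈ A then (1:ℝ≥0∞) else 0)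
          * ENNReal.ofReal (8*k^2) ^ (Finset.univ.erase r).card := lintegral_mono key
    _ = volume A * ENNReal.ofReal (8*k^2) ^ (Finset.univ.erase r).card := by
        rw [MeasureTheory.lintegral_mul_const' _ _
          (ENNReal.pow_ne_top ENNReal.ofReal_ne_top)]
        congr 1
        have : (fun y : Pt => if y ∈ A then (1:ℝ≥0∞) else 0) = A.indicator 1 := by
          funext y
          by_cases h : y ∈ A
          · rw [if_pos h, Set.indicator_of_mem h]; rfl
          · rw [if_neg h, Set.indicator_of_notMem h]
        rw [this, MeasureTheory.lintegral_indicator_one hA]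
    _ = volume A * ENNReal.ofReal (8*k^2) ^ (N - 1) := by
        rw [Finset.card_erase_of_mem (Finset.mem_univ r), Finset.card_univ,
          Fintype.card_fin]

/-! ### Pointwise bound -/

lemma Fgam_nonneg (k α : ℝ) (B Γ : Finset I3) (Pγ P : List Plate) :
    0 ≤ FgamL k α B Γ Pγ P := by
  rw [FgamL]; split_ifs <;> norm_num

lemma Fgam_eq_one_of_ne {k α : ℝ} {B Γ : Finset I3} {Pγ P : List Plate}
    (h : FgamL k α B Γ Pγ P ≠ 0) : FgamL k α B Γ Pγ P = 1 := by
  rw [FgamL] at h ⊢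
  split_ifs at h ⊢ with hc
  · rfl
  · exact absurd rfl h

lemma intersects_psiCond {k α : ℝ} (hk : 1 < k) (hα : α ≤ 1) {q : Fin 3}
    {b b' : Bool} {y y' : Pt} (h : Intersects k α (y, (q, b)) (y', (q, b'))) :
    psiCond k q y' y := by
  intro j
  unfold bw
  by_cases hj : j = q
  · rw [if_pos hj]; subst hj; exact intersects_axis_close h
  · rw [if_neg hj]; exact intersects_center_close hk.le hα h j

lemma per_b_bound {k α : ℝ} (hk : 1 < k) (hα : α ≤ 1) (q : Fin 3)
    {B Γ : Finset I3} {Pγ : List Plate} (hPγ : ∀ p ∈ Pγ, blockIdx (k/2) p.1 ∈ Γ)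
    {N : ℕ} [NeZero N] (x : Fin N → Pt) (b : Fin N → Bool) :
    ENNReal.ofReal |ursell k α (fun m => (x m, (q, b m)))
        * FgamL k α B Γ Pγ (mkConf x (fun m => (q, b m)))|
      ≤ ∑ r : Fin N, (if x r ∈ anchorSet k Γ then (1:ℝ≥0∞) else 0) *
          ∑ ρ : Fin N → Fin N, (if NoCyc ρ r then (1:ℝ≥0∞) else 0) *
            ∏ v ∈ Finset.univ.erase r,
              (if psiCond k q (x (ρ v)) (x v) then (1:ℝ≥0∞) else 0) := by
  by_cases hF : FgamL k α B Γ Pγ (mkConf x (fun m => (q, b m))) = 0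
  · rw [hF, mul_zero, abs_zero, ENNReal.ofReal_zero]
    exact zero_le
  · obtain ⟨i₀, hi₀⟩ := Fgam_anchor hk hα hPγ hF
    rw [Fgam_eq_one_of_ne hF, mul_one]
    set pb : Fin N → Plate := fun m => (x m, (q, b m)) with hpb
    set P : (Fin N → Fin N) → Prop := fun ρ =>
      NoCyc ρ i₀ ∧ ∀ v, v ≠ i₀ → Intersects k α (pb v) (pb (ρ v)) with hP
    have h1 : |ursell k α pb| ≤ ((treeSet id (Gp k α pb)).card : ℝ) := by
      rw [ursell_eq_Wf k α pb]
      exact abs_Wf_le (Gp k α pb) id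
    have h2 : (treeSet id (Gp k α pb)).card ≤ (Finset.univ.filter P).card :=
      treeSet_card_le k α pb i₀
    have h3 : ENNReal.ofReal |ursell k α pb|
        ≤ ((Finset.univ.filter P).card : ℝ≥0∞) := by
      refine le_trans (ENNReal.ofReal_le_ofReal (h1.trans (Nat.cast_le.2 h2))) ?_
      rw [ENNReal.ofReal_natCast]
    refine le_trans h3 ?_
    have h4 : ((Finset.univ.filter P).card : ℝ≥0∞)
        ≤ (if x i₀ ∈ anchorSet k Γ then (1:ℝ≥0∞) else 0) *
          ∑ ρ : Fin N → Fin N, (if NoCyc ρ i₀ then (1:ℝ≥0∞) else 0) *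
            ∏ v ∈ Finset.univ.erase i₀,
              (if psiCond k q (x (ρ v)) (x v) then (1:ℝ≥0∞) else 0) := by
      rw [if_pos hi₀, one_mul]
      have hcs : ((Finset.univ.filter P).card : ℝ≥0∞)
          = ∑ ρ ∈ Finset.univ.filter P, (1:ℝ≥0∞) := by
        rw [Finset.sum_const, nsmul_eq_mul, mul_one]
      rw [hcs]
      refine le_trans (Finset.sum_le_sum (fun ρ hρ => ?_))
        (Finset.sum_le_sum_of_subset_of_nonneg (Finset.filter_subset _ _)
          (fun _ _ _ => zero_le))
      have hPρ : P ρ := (Finset.mem_filter.1 hρ).2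
      rw [if_pos hPρ.1, one_mul]
      have hfac : ∀ v ∈ Finset.univ.erase i₀,
          (if psiCond k q (x (ρ v)) (x v) then (1:ℝ≥0∞) else 0) = 1 := by
        intro v hv
        have hvne := (Finset.mem_erase.1 hv).1
        have hint := hPρ.2 v hvne
        rw [if_pos (intersects_psiCond hk hα hint)]
      rw [Finset.prod_congr rfl hfac, Finset.prod_const, one_pow]
    refine le_trans h4 ?_
    exact Finset.single_le_sum (f := fun r => (if x r ∈ anchorSet k Γ then (1:ℝ≥0∞) else 0) *
      ∑ ρ : Fin N → Fin N, (if NoCyc ρ r then (1:ℝ≥0∞) else 0) *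
        ∏ v ∈ Finset.univ.erase r,
          (if psiCond k q (x (ρ v)) (x v) then (1:ℝ≥0∞) else 0))
      (fun r _ => zero_le) (Finset.mem_univ i₀)

lemma regionOf_measurable (k : ℝ) (B : Finset I3) : MeasurableSet (regionOf k B) := by
  have hbm : Measurable (fun x : Pt => blockIdx (k/2) x) := by
    apply measurable_pi_lambda
    intro j
    exact ((measurable_pi_apply j).div_const _).floor
  have : regionOf k B = (fun x : Pt => blockIdx (k/2) x) ⁻¹' (↑B : Set I3) := rfl
  rw [this]
  exact hbm ((Set.Finite.measurableSet (B.finite_toSet)))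

lemma In_bound {k α : ℝ} (hk : 1 < k) (hα : α ≤ 1) (q : Fin 3)
    {B Γ : Finset I3} {Pγ : List Plate} (hPγ : ∀ p ∈ Pγ, blockIdx (k/2) p.1 ∈ Γ)
    {N : ℕ} [NeZero N] :
    |∫ x : Fin N → Pt in Set.univ.pi (fun _ => regionOf k B),
        ∑ b : Fin N → Bool, ursell k α (fun m => (x m, (q, b m)))
          * FgamL k α B Γ Pγ (mkConf x (fun m => (q, b m)))|
      ≤ (2:ℝ)^N * ((N:ℝ) * ((N:ℝ)^N *
          (((Γ.card:ℝ) * (5*k/2)^3) * (8*k^2)^(N-1)))) := by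
  have hk0 : (0:ℝ) ≤ k := by linarith
  have h53 : (0:ℝ) ≤ (5*k/2)^3 := pow_nonneg (by linarith) 3
  have h8 : (0:ℝ) ≤ 8*k^2 := by positivity
  have hcard : (0:ℝ) ≤ (Γ.card:ℝ) := Nat.cast_nonneg _
  set A := anchorSet k Γ with hA
  have hAm : MeasurableSet A := anchorSet_measurable k Γ
  set f : (Fin N → Pt) → ℝ := fun x =>
    ∑ b : Fin N → Bool, ursell k α (fun m => (x m, (q, b m)))
      * FgamL k α B Γ Pγ (mkConf x (fun m => (q, b m))) with hf
  set S : (Fin N → Pt) → ℝ≥0∞ := fun x =>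
    ∑ r : Fin N, (if x r ∈ A then (1:ℝ≥0∞) else 0) *
      ∑ ρ : Fin N → Fin N, (if NoCyc ρ r then (1:ℝ≥0∞) else 0) *
        ∏ v ∈ Finset.univ.erase r,
          (if psiCond k q (x (ρ v)) (x v) then (1:ℝ≥0∞) else 0) with hS
  have hpt : ∀ x, ENNReal.ofReal ‖f x‖ ≤ (2:ℝ≥0∞)^N * S x := by
    intro x
    rw [Real.norm_eq_abs]
    calc ENNReal.ofReal |f x|
        ≤ ENNReal.ofReal (∑ b : Fin N → Bool,
            |ursell k α (fun m => (x m, (q, b m)))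
              * FgamL k α B Γ Pγ (mkConf x (fun m => (q, b m)))|) :=
          ENNReal.ofReal_le_ofReal (Finset.abs_sum_le_sum_abs _ _)
      _ = ∑ b : Fin N → Bool, ENNReal.ofReal
            |ursell k α (fun m => (x m, (q, b m)))
              * FgamL k α B Γ Pγ (mkConf x (fun m => (q, b m)))| :=
          ENNReal.ofReal_sum_of_nonneg (fun b _ => abs_nonneg _)
      _ ≤ ∑ _b : Fin N → Bool, S x :=
          Finset.sum_le_sum (fun b _ => per_b_bound hk hα q hPγ x b)
      _ = (2:ℝ≥0∞)^N * S x := by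
          rw [Finset.sum_const, Finset.card_univ, nsmul_eq_mul]
          congr 1
          rw [Fintype.card_fun, Fintype.card_bool, Fintype.card_fin]
          push_cast
          rfl
  have hmeasψ : ∀ (r : Fin N) (ρ : Fin N → Fin N),
      Measurable (fun x : Fin N → Pt => (if x r ∈ A then (1:ℝ≥0∞) else 0) *
        ((if NoCyc ρ r then (1:ℝ≥0∞) else 0) *
          ∏ v ∈ Finset.univ.erase r,
            (if psiCond k q (x (ρ v)) (x v) then (1:ℝ≥0∞) else 0))) := by
    intro r ρ
    refine Measurable.mul ?_ (Measurable.mul measurable_const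
      (Finset.measurable_prod _ (fun v _ => psi_measurable k q v (ρ v))))
    exact Measurable.ite ((measurable_pi_apply r) hAm) measurable_const measurable_const
  have hperρ : ∀ (r : Fin N) (ρ : Fin N → Fin N),
      ∫⁻ x : Fin N → Pt, (if x r ∈ A then (1:ℝ≥0∞) else 0) *
        ((if NoCyc ρ r then (1:ℝ≥0∞) else 0) *
          ∏ v ∈ Finset.univ.erase r,
            (if psiCond k q (x (ρ v)) (x v) then (1:ℝ≥0∞) else 0))
        ≤ volume A * ENNReal.ofReal (8*k^2) ^ (N-1) := by
    intro r ρ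
    by_cases hρ : NoCyc ρ r
    · simp only [if_pos hρ, one_mul]
      exact anchored_tree_integral hk0 q A hAm r ρ hρ
    · simp only [if_neg hρ, zero_mul, mul_zero]
      rw [lintegral_zero]
      exact zero_le
  have hglobal : ∫⁻ x : Fin N → Pt, (2:ℝ≥0∞)^N * S x
      ≤ (2:ℝ≥0∞)^N * ((N:ℝ≥0∞) * ((N:ℝ≥0∞)^N *
          (volume A * ENNReal.ofReal (8*k^2) ^ (N-1)))) := by
    rw [MeasureTheory.lintegral_const_mul' _ _
      (ENNReal.pow_ne_top (by norm_num : (2:ℝ≥0∞) ≠ ⊤))]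
    refine mul_le_mul_right ?_ _
    have hS2 : ∀ x, S x = ∑ r : Fin N, ∑ ρ : Fin N → Fin N,
        (if x r ∈ A then (1:ℝ≥0∞) else 0) *
          ((if NoCyc ρ r then (1:ℝ≥0∞) else 0) *
            ∏ v ∈ Finset.univ.erase r,
              (if psiCond k q (x (ρ v)) (x v) then (1:ℝ≥0∞) else 0)) := by
      intro x
      rw [hS]
      refine Finset.sum_congr rfl (fun r _ => ?_)
      rw [Finset.mul_sum]
    calc ∫⁻ x, S x
        = ∫⁻ x, ∑ r : Fin N, ∑ ρ : Fin N → Fin N,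
            (if x r ∈ A then (1:ℝ≥0∞) else 0) *
              ((if NoCyc ρ r then (1:ℝ≥0∞) else 0) *
                ∏ v ∈ Finset.univ.erase r,
                  (if psiCond k q (x (ρ v)) (x v) then (1:ℝ≥0∞) else 0)) :=
          lintegral_congr (fun x => hS2 x)
      _ = ∑ r : Fin N, ∑ ρ : Fin N → Fin N, ∫⁻ x : Fin N → Pt,
            (if x r ∈ A then (1:ℝ≥0∞) else 0) *
              ((if NoCyc ρ r then (1:ℝ≥0∞) else 0) *
                ∏ v ∈ Finset.univ.erase r,
                  (if psiCond k q (x (ρ v)) (x v) then (1:ℝ≥0∞) else 0)) := by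
          rw [MeasureTheory.lintegral_finset_sum _
            (fun r _ => Finset.measurable_sum _ (fun ρ _ => hmeasψ r ρ))]
          exact Finset.sum_congr rfl (fun r _ =>
            MeasureTheory.lintegral_finset_sum _ (fun ρ _ => hmeasψ r ρ))
      _ ≤ ∑ _r : Fin N, ∑ _ρ : Fin N → Fin N,
            volume A * ENNReal.ofReal (8*k^2) ^ (N-1) :=
          Finset.sum_le_sum (fun r _ => Finset.sum_le_sum (fun ρ _ => hperρ r ρ))
      _ = (N:ℝ≥0∞) * ((N:ℝ≥0∞)^N * (volume A * ENNReal.ofReal (8*k^2) ^ (N-1))) := by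
          simp only [Finset.sum_const, Finset.card_univ, Fintype.card_fun,
            Fintype.card_fin, nsmul_eq_mul, Nat.cast_pow]
  have hvolA : volume A ≤ (Γ.card : ℝ≥0∞) * ENNReal.ofReal ((5*k/2)^3) :=
    anchor_vol hk0 Γ
  have hfinal : ∫⁻ x : Fin N → Pt, ENNReal.ofReal ‖f x‖
      ≤ ENNReal.ofReal ((2:ℝ)^N * ((N:ℝ) * ((N:ℝ)^N *
          (((Γ.card:ℝ) * (5*k/2)^3) * (8*k^2)^(N-1))))) := by
    have hE : ENNReal.ofReal ((2:ℝ)^N * ((N:ℝ) * ((N:ℝ)^N *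
        (((Γ.card:ℝ) * (5*k/2)^3) * (8*k^2)^(N-1)))))
        = (2:ℝ≥0∞)^N * ((N:ℝ≥0∞) * ((N:ℝ≥0∞)^N *
            (((Γ.card:ℝ≥0∞) * ENNReal.ofReal ((5*k/2)^3)) *
              ENNReal.ofReal (8*k^2) ^ (N-1)))) := by
      rw [ENNReal.ofReal_mul (pow_nonneg (by norm_num : (0:ℝ) ≤ 2) N),
        ENNReal.ofReal_mul (Nat.cast_nonneg N),
        ENNReal.ofReal_mul (pow_nonneg (Nat.cast_nonneg N) N),
        ENNReal.ofReal_mul (mul_nonneg hcard h53),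
        ENNReal.ofReal_mul hcard,
        ENNReal.ofReal_pow (by norm_num : (0:ℝ) ≤ 2),
        ENNReal.ofReal_pow (Nat.cast_nonneg N),
        ENNReal.ofReal_pow h8,
        ENNReal.ofReal_natCast, ENNReal.ofReal_natCast, ENNReal.ofReal_ofNat]
    rw [hE]
    refine le_trans (lintegral_mono hpt) (le_trans hglobal ?_)
    refine mul_le_mul_right (mul_le_mul_right (mul_le_mul_right ?_ _) _) _
    exact mul_le_mul_left hvolA _
  calc |∫ x : Fin N → Pt in Set.univ.pi (fun _ => regionOf k B), f x|
      = ‖∫ x : Fin N → Pt in Set.univ.pi (fun _ => regionOf k B), f x‖ :=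
        (Real.norm_eq_abs _).symm
    _ ≤ (∫⁻ x : Fin N → Pt in Set.univ.pi (fun _ => regionOf k B),
          ENNReal.ofReal ‖f x‖).toReal := MeasureTheory.norm_integral_le_lintegral_norm f
    _ ≤ (2:ℝ)^N * ((N:ℝ) * ((N:ℝ)^N *
          (((Γ.card:ℝ) * (5*k/2)^3) * (8*k^2)^(N-1)))) := by
        refine ENNReal.toReal_le_of_le_ofReal (by positivity) ?_
        refine le_trans (lintegral_mono' Measure.restrict_le_self (le_refl _)) hfinal

/-! ### Arithmetic -/

lemma pow_self_le_fact (N : ℕ) : (N:ℝ)^N ≤ 3^N * (Nat.factorial N : ℝ) := by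
  induction N with
  | zero => norm_num
  | succ n ihn =>
      rcases Nat.eq_zero_or_pos n with rfl | hn
      · norm_num [Nat.factorial]
      · have hnR : (0:ℝ) < n := by exact_mod_cast hn
        have hstep : ((n:ℝ)+1)^n ≤ 3 * (n:ℝ)^n := by
          have h1 : (n:ℝ)+1 = (n:ℝ) * (1 + 1/n) := by field_simp
          have h2 : (1 + 1/(n:ℝ)) ≤ Real.exp (1/n) := by
            have := Real.add_one_le_exp (1/(n:ℝ))
            linarith
          have h3 : ((n:ℝ)+1)^n = (n:ℝ)^n * (1+1/(n:ℝ))^n := by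
            rw [h1, mul_pow]
          have h4 : (1+1/(n:ℝ))^n ≤ Real.exp (1/(n:ℝ)) ^ n :=
            pow_le_pow_left₀ (by positivity) h2 n
          have h5 : Real.exp (1/(n:ℝ)) ^ n = Real.exp ((1/(n:ℝ))*n) := by
            rw [← Real.exp_nat_mul]
            ring_nf
          have h6 : (1/(n:ℝ))*n = 1 := by field_simp
          have h7 : Real.exp 1 ≤ 3 := by
            have := Real.exp_one_lt_d9
            linarith
          have h8 : (1+1/(n:ℝ))^n ≤ 3 := by
            rw [h5, h6] at h4
            linarith
          rw [h3]
          have hp : (0:ℝ) ≤ (n:ℝ)^n := by positivity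
          nlinarith
        have hfactpos : (0:ℝ) < (Nat.factorial n : ℝ) := by
          exact_mod_cast Nat.factorial_pos n
        have hih := ihn
        calc ((n+1:ℕ):ℝ)^(n+1) = ((n:ℝ)+1) * ((n:ℝ)+1)^n := by
              push_cast; ring
          _ ≤ ((n:ℝ)+1) * (3 * (n:ℝ)^n) := by nlinarith
          _ ≤ ((n:ℝ)+1) * (3 * (3^n * (Nat.factorial n : ℝ))) := by nlinarith
          _ = 3^(n+1) * (Nat.factorial (n+1) : ℝ) := by
              rw [Nat.factorial_succ]
              push_cast
              ring

lemma nat_le_two_pow (N : ℕ) : (N:ℝ) ≤ 2^N := by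
  have : N < 2 ^ N := Nat.lt_two_pow_self
  have h : (N:ℝ) < (2:ℝ)^N := by exact_mod_cast this
  linarith

lemma arith_bound {z k : ℝ} (hz : 0 < z) (hk : 1 < k) {c : ℝ} (hc : 0 ≤ c) (n : ℕ) :
    z^(n+1+1)/(Nat.factorial (n+1+1) : ℝ) *
      ((2:ℝ)^(n+2) * (((n+2:ℕ):ℝ) * (((n+2:ℕ):ℝ)^(n+2) *
        ((c * (5*k/2)^3) * (8*k^2)^(n+1)))))
    ≤ (192 * (z*k^3) * c) * (96*(z*k^2))^(n+1) := by
  have hk0 : (0:ℝ) < k := by linarith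
  have hfact : (0:ℝ) < (Nat.factorial (n+2) : ℝ) := by
    exact_mod_cast Nat.factorial_pos (n+2)
  have h1 : ((n+2:ℕ):ℝ)^(n+2) ≤ 3^(n+2) * (Nat.factorial (n+2) : ℝ) :=
    pow_self_le_fact (n+2)
  have h2 : ((n+2:ℕ):ℝ) ≤ 2^(n+2) := nat_le_two_pow (n+2)
  have h3 : (5*k/2)^3 ≤ 16*k^3 := by
    have hkc : (0:ℝ) ≤ k^3 := by positivity
    nlinarith
  have hz0 : (0:ℝ) ≤ z := le_of_lt hz
  have hA : z^(n+1+1)/(Nat.factorial (n+1+1) : ℝ) *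
      ((2:ℝ)^(n+2) * (((n+2:ℕ):ℝ) * (((n+2:ℕ):ℝ)^(n+2) *
        ((c * (5*k/2)^3) * (8*k^2)^(n+1)))))
      ≤ z^(n+2)/(Nat.factorial (n+2) : ℝ) *
      ((2:ℝ)^(n+2) * ((2:ℝ)^(n+2) * ((3^(n+2) * (Nat.factorial (n+2) : ℝ)) *
        ((c * (16*k^3)) * (8*k^2)^(n+1))))) := by
    have e1 : n+1+1 = n+2 := rfl
    rw [e1]
    have hnn : (0:ℝ) ≤ z^(n+2)/(Nat.factorial (n+2) : ℝ) := by positivity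
    refine mul_le_mul_of_nonneg_left ?_ hnn
    have hb1 : (0:ℝ) ≤ (8*k^2)^(n+1) := by positivity
    have hb2 : (0:ℝ) ≤ c * (5*k/2)^3 := mul_nonneg hc (by positivity)
    have hb3 : c * (5*k/2)^3 ≤ c * (16*k^3) := mul_le_mul_of_nonneg_left h3 hc
    have hb4 : ((n+2:ℕ):ℝ)^(n+2) * ((c * (5*k/2)^3) * (8*k^2)^(n+1))
        ≤ (3^(n+2) * (Nat.factorial (n+2) : ℝ)) * ((c * (16*k^3)) * (8*k^2)^(n+1)) := by
      refine mul_le_mul h1 (mul_le_mul_of_nonneg_right hb3 hb1) (mul_nonneg hb2 hb1) ?_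
      positivity
    have hb5 : ((n+2:ℕ):ℝ) * (((n+2:ℕ):ℝ)^(n+2) * ((c * (5*k/2)^3) * (8*k^2)^(n+1)))
        ≤ (2:ℝ)^(n+2) * ((3^(n+2) * (Nat.factorial (n+2) : ℝ)) *
          ((c * (16*k^3)) * (8*k^2)^(n+1))) := by
      refine mul_le_mul h2 hb4 ?_ (by positivity)
      positivity
    exact mul_le_mul_of_nonneg_left hb5 (by positivity)
  refine le_trans hA (le_of_eq ?_)
  have e6 : (96:ℝ)^(n+1) = 2^(n+1)*(2^(n+1)*(3^(n+1)*8^(n+1))) := by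
    rw [← mul_pow, ← mul_pow, ← mul_pow]
    norm_num
  have e4 : (96*(z*k^2))^(n+1) = 96^(n+1) * (z^(n+1) * (k^2)^(n+1)) := by
    rw [mul_pow, mul_pow]
  have e5 : (8*k^2)^(n+1) = 8^(n+1) * (k^2)^(n+1) := by rw [mul_pow]
  rw [e4, e6, e5]
  field_simp
  ring

/-! ### The one-plate Ursell function -/

lemma ursell_one (k α : ℝ) (p : Fin 1 → Plate) : ursell k α p = 1 := by
  rw [ursell]
  rw [Finset.sum_eq_single (∅ : Finset (Fin 1 × Fin 1))]
  · rw [if_pos, Finset.prod_empty]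
    refine ⟨fun e he => absurd he (Finset.notMem_empty e), ?_⟩
    refine ⟨fun a b => ?_⟩
    exact (Subsingleton.elim a b) ▸ SimpleGraph.Reachable.refl a
  · intro E _ hEne
    rw [if_neg]
    rintro ⟨hwf, -⟩
    obtain ⟨e, he⟩ := Finset.nonempty_iff_ne_empty.2 hEne
    have hlt : e.1 < e.2 := hwf e he
    have he1 : e.1 = e.2 := Subsingleton.elim e.1 e.2
    rw [he1] at hlt
    exact lt_irrefl _ hlt
  · intro h
    exact absurd (Finset.mem_univ _) h

end DressAux2
end

set_option maxHeartbeats 1600000 in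
/-- **Bound on the contour dressing factor.**  There is `C > 0` such that, if
`z k²` is sufficiently small, then for every `q` and every contour `γ`
(a possible skeleton together with a compatible plate configuration `Pγ`
inside its support),
`exp(-∫_{Ω^q_Λ} dP φ^T(P) z^{|P|} F_γ(P)) ≤ e^{C (zk³)(zk²) |Γ_γ'|}`. -/
theorem contour_dressing_factor_bound :
    ∃ C δ : ℝ, 0 < C ∧ 0 < δ ∧
      ∀ k α z : ℝ, 1 < k → α ∈ Set.Ioc (3/4 : ℝ) 1 → 0 < z → z * k ^ 2 ≤ δ →
        ∀ m : ℕ, 1 ≤ m → ∀ q : Fin 3, ∀ s : Skeleton, ∀ Pγ : List Plate,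
          PossibleSkel k α (boxBm m) q s → extMagIs (boxBm m) s q →
          (∀ p ∈ Pγ, blockIdx (k / 2) p.1 ∈ s.Γ) →
          confWeightL (k / 2) s.Γ s.σ Pγ * phiL k α Pγ ≠ 0 →
          Real.exp (-(dressInt k α z (boxBm m) q s.Γ Pγ)) ≤
            Real.exp (C * (z * k ^ 3) * (z * k ^ 2) * (s.Γ.card : ℝ)) := by
  refine ⟨65536, 1/192, by norm_num, by norm_num, ?_⟩
  intro k α z hk hα hz hδ m hm q s Pγ hskel hext hPγ hconf
  rw [Real.exp_le_exp]
  have hk0 : (0:ℝ) < k := by linarith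
  have hα1 : α ≤ 1 := hα.2
  have hz0 : (0:ℝ) ≤ z := le_of_lt hz
  set B := boxBm m with hB
  set Γ := s.Γ with hΓ
  set a : ℕ → ℝ := fun n => (z ^ (n + 1) / (Nat.factorial (n + 1) : ℝ)) *
    ∫ x : Fin (n + 1) → Pt in Set.univ.pi (fun _ => regionOf k B),
      ∑ b : Fin (n + 1) → Bool,
        ursell k α (fun i => (x i, (q, b i))) *
          FgamL k α B Γ Pγ (mkConf x (fun i => (q, b i))) with ha
  have hdress : dressInt k α z B q Γ Pγ = ∑' n, a n := rfl
  set M2 : ℝ := 192 * (z*k^3) * (Γ.card:ℝ) with hM2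
  set r : ℝ := 96*(z*k^2) with hr
  have hr0 : 0 ≤ r := by
    rw [hr]
    have : (0:ℝ) ≤ z * k^2 := mul_nonneg hz0 (by positivity)
    linarith
  have hr2 : r ≤ 1/2 := by
    rw [hr]; linarith
  have hM20 : 0 ≤ M2 := by
    rw [hM2]
    have h1 : (0:ℝ) ≤ z * k^3 := mul_nonneg hz0 (by positivity)
    have h2 : (0:ℝ) ≤ (Γ.card:ℝ) := Nat.cast_nonneg _
    nlinarith
  have hRHS0 : (0:ℝ) ≤ 65536 * (z * k ^ 3) * (z * k ^ 2) * (Γ.card : ℝ) := by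
    have h1 : (0:ℝ) ≤ z * k^3 := mul_nonneg hz0 (by positivity)
    have h2 : (0:ℝ) ≤ z * k^2 := mul_nonneg hz0 (by positivity)
    have h3 : (0:ℝ) ≤ (Γ.card:ℝ) := Nat.cast_nonneg _
    have := mul_nonneg (mul_nonneg (mul_nonneg (by norm_num : (0:ℝ) ≤ 65536) h1) h2) h3
    linarith
  have ha0 : 0 ≤ a 0 := by
    rw [ha]
    refine mul_nonneg (by positivity) ?_
    refine MeasureTheory.setIntegral_nonneg
      (MeasurableSet.univ_pi (fun _ => DressAux2.regionOf_measurable k B)) ?_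
    intro x _
    refine Finset.sum_nonneg (fun b _ => ?_)
    rw [DressAux2.ursell_one k α (fun i => (x i, (q, b i))), one_mul]
    exact DressAux2.Fgam_nonneg k α B Γ Pγ _
  have htail : ∀ j : ℕ, |a (j+1)| ≤ M2 * r * r^j := by
    intro j
    have hIb := DressAux2.In_bound (k := k) (α := α) hk hα1 q
      (B := B) (Γ := Γ) (Pγ := Pγ) hPγ (N := j+2)
    have e1 : (j+2) - 1 = j+1 := rfl
    rw [e1] at hIb
    have hcoef : (0:ℝ) ≤ z ^ (j+1+1) / (Nat.factorial (j+1+1) : ℝ) := by positivity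
    have habs : |a (j+1)| = (z ^ (j+1+1) / (Nat.factorial (j+1+1) : ℝ)) *
        |∫ x : Fin (j+2) → Pt in Set.univ.pi (fun _ => regionOf k B),
          ∑ b : Fin (j+2) → Bool,
            ursell k α (fun i => (x i, (q, b i))) *
              FgamL k α B Γ Pγ (mkConf x (fun i => (q, b i)))| := by
      rw [ha, abs_mul, abs_of_nonneg hcoef]
    rw [habs]
    have step1 := mul_le_mul_of_nonneg_left hIb hcoef
    refine le_trans step1 ?_
    have step2 := DressAux2.arith_bound hz hk (Nat.cast_nonneg Γ.card) j
    refine le_trans (le_of_eq ?_) (le_trans step2 (le_of_eq ?_))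
    · norm_num
    · rw [hM2, hr]
      ring
  by_cases hS : Summable a
  · have h3 := Summable.tsum_eq_zero_add hS
    have htail' : ∀ j, -(M2*r*r^j) ≤ a (j+1) := by
      intro j
      have := (abs_le.1 (htail j)).1
      linarith
    have hgeom : Summable (fun j : ℕ => r^j) :=
      summable_geometric_of_lt_one hr0 (by linarith)
    have hsumL : Summable (fun j : ℕ => -(M2*r*r^j)) := by
      have e : (fun j : ℕ => -(M2*r*r^j)) = fun j : ℕ => -((M2*r)*r^j) := by
        funext j; ring
      rw [e]
      exact (hgeom.mul_left (M2*r)).neg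
    have hsumT : Summable (fun j => a (j+1)) := (summable_nat_add_iff 1).2 hS
    have h5 := Summable.tsum_le_tsum htail' hsumL hsumT
    have h6 : ∑' j : ℕ, -(M2*r*r^j) = -((M2*r) * (1-r)⁻¹) := by
      have e : (fun j : ℕ => -(M2*r*r^j)) = fun j : ℕ => -((M2*r)*r^j) := by
        funext j; ring
      rw [e, tsum_neg, tsum_mul_left, tsum_geometric_of_lt_one hr0 (by linarith)]
    have hinv : (1-r)⁻¹ ≤ 2 := by
      have h12 : (1:ℝ)/2 ≤ 1-r := by linarith
      calc (1-r)⁻¹ ≤ ((1:ℝ)/2)⁻¹ := by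
            exact inv_anti₀ (by norm_num) h12
        _ = 2 := by norm_num
    have hnnMr : 0 ≤ M2 * r := mul_nonneg hM20 hr0
    rw [hdress, h3]
    have hfin : -(a 0 + ∑' j : ℕ, a (j+1)) ≤ (M2*r) * 2 := by
      have hA : -((M2*r) * (1-r)⁻¹) ≤ ∑' j : ℕ, a (j+1) := by
        rw [← h6]; exact h5
      have h7 : (M2*r)*(1-r)⁻¹ ≤ (M2*r)*2 := mul_le_mul_of_nonneg_left hinv hnnMr
      linarith
    refine le_trans hfin ?_
    have heq : M2 * r * 2 = 36864 * (z*k^3) * (z*k^2) * (Γ.card:ℝ) := by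
      rw [hM2, hr]; ring
    rw [heq]
    have h1 : (0:ℝ) ≤ z * k^3 := mul_nonneg hz0 (by positivity)
    have h2 : (0:ℝ) ≤ z * k^2 := mul_nonneg hz0 (by positivity)
    have h3' : (0:ℝ) ≤ (Γ.card:ℝ) := Nat.cast_nonneg _
    nlinarith [mul_nonneg (mul_nonneg h1 h2) h3']
  · rw [hdress, tsum_eq_zero_of_not_summable hS, neg_zero]
    exact hRHS0
end
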